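/- arXiv:1402.0423 — 6 statements merged into one kernel-verified Lean document; each statement's English description precedes it below -/
import Mathlib

section
/- (Gascuel–Caraux lower bound, first case) If 1 ≤ r ≤ k and r/k ≤ 1/2, then the expected value of the r-th order statistic satisfies E[X_{(r:k)}] ≥ μ − σ·√(k/(2r)). -/
open MeasureTheory ProbabilityTheory

noncomputable def gfun (μ x : ℝ) : ℝ := (max (μ - x) 0) ^ 2

lemma card_filter_lt (n r : ℕ) (h : r ≤ n) :
    (Finset.univ.filter (fun j : Fin n => (j:ℕ) < r)).card = r := by
  have : (Finset.univ.filter (fun j : Fin n => (j:ℕ) < r)) = Finset.map (Fin.castLEEmb h) Finset.univ := by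
    ext j
    simp only [Finset.mem_filter, Finset.mem_univ, true_and, Finset.mem_map, Fin.castLEEmb]
    constructor
    · intro hj; exact ⟨⟨j, hj⟩, by simp⟩
    · rintro ⟨i, hi⟩; simp at hi; subst hi; simp [i.isLt]
  simp [this]

lemma pointwise {k : ℕ} (r : ℕ) (hr1 : 1 ≤ r) (hrk : r ≤ k) (μ : ℝ) (y : Fin k → ℝ) :
    (r : ℝ) * gfun μ (((List.ofFn y).mergeSort (fun a b => decide (a ≤ b))).getD (r - 1) 0)
      ≤ ∑ i, gfun μ (y i) := by
  set L := (List.ofFn y).mergeSort (fun a b => decide (a ≤ b)) with hL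
  have hlen : L.length = k := by simp [hL]
  have hsort : L.Pairwise (· ≤ ·) := by
    have := List.pairwise_mergeSort (le := fun a b : ℝ => decide (a ≤ b))
      (fun a b c hab hbc => by simp_all; linarith) (fun a b => by simp [le_total]) (List.ofFn y)
    rw [hL]; exact this.imp (fun h => by simpa using h)
  have hr1' : r - 1 < L.length := by omega
  have hgetD : L.getD (r - 1) 0 = L.get ⟨r - 1, hr1'⟩ := by
    rw [List.getD_eq_getElem _ _ hr1']; rfl
  set c := gfun μ (L.get ⟨r - 1, hr1'⟩) with hc
  -- sum equality
  have hsum : ∑ i, gfun μ (y i) = ∑ j : Fin L.length, gfun μ (L.get j) := by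
    have h1 : ∑ i, gfun μ (y i) = ((List.ofFn y).map (gfun μ)).sum := by
      rw [List.map_ofFn, List.sum_ofFn]; rfl
    have h2 : ∑ j : Fin L.length, gfun μ (L.get j) = (L.map (gfun μ)).sum := by
      conv_rhs => rw [← List.ofFn_get L]
      rw [List.map_ofFn, List.sum_ofFn]; rfl
    rw [h1, h2]
    exact (List.Perm.map (gfun μ) (List.mergeSort_perm (List.ofFn y) _)).sum_eq.symm
  rw [hsum, hgetD, ← hc]
  set s := Finset.univ.filter (fun j : Fin L.length => (j:ℕ) < r) with hs
  have hcard : s.card = r := card_filter_lt _ _ (by omega)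
  have hterm : ∀ j ∈ s, c ≤ gfun μ (L.get j) := by
    intro j hj
    have hjr : (j : ℕ) < r := by simpa [hs] using hj
    have hle : L.get j ≤ L.get ⟨r - 1, hr1'⟩ := hsort.rel_get_of_le (by simp [Fin.le_def]; omega)
    have : max (μ - L.get ⟨r - 1, hr1'⟩) 0 ≤ max (μ - L.get j) 0 :=
      max_le_max (by linarith) le_rfl
    exact pow_le_pow_left₀ (le_max_right _ _) this 2
  calc (r : ℝ) * c = s.card • c := by rw [hcard, nsmul_eq_mul]
    _ = ∑ _j ∈ s, c := (Finset.sum_const c).symm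
    _ ≤ ∑ j ∈ s, gfun μ (L.get j) := Finset.sum_le_sum hterm
    _ ≤ ∑ j : Fin L.length, gfun μ (L.get j) :=
        Finset.sum_le_sum_of_subset_of_nonneg (Finset.subset_univ s)
          (fun j _ _ => sq_nonneg _)

lemma gfun_le_sq (a : ℝ) : (max a 0)^2 ≤ a^2 := by
  rcases le_total a 0 with h | h
  · rw [max_eq_right h]; simpa using sq_nonneg a
  · rw [max_eq_left h]


open Classical in
/-- The `r`-th order statistic (with `1 ≤ r ≤ k`) of `X₁, …, X_k` at a sample point `ω`:
the `(r−1)`-indexed entry of the sorted list `(X₁(ω), …, X_k(ω))`. -/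
noncomputable def orderStat {Ω : Type*} {k : ℕ} (X : Fin k → Ω → ℝ) (r : ℕ) (ω : Ω) : ℝ :=
  ((List.ofFn fun i => X i ω).mergeSort (fun a b => decide (a ≤ b))).getD (r - 1) 0

/-- Gascuel–Caraux lower bound, first case: if `1 ≤ r ≤ k` and `r/k ≤ 1/2`, then
`E[X_{(r:k)}] ≥ μ − σ·√(k/(2r))` for identically distributed, square-integrable
random variables with mean `μ`, variance `σ²`, and distribution symmetric about `μ`. -/
theorem gascuel_caraux_lower_first {Ω : Type*} [MeasureSpace Ω]
    [IsProbabilityMeasure (volume : Measure Ω)]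
    {k : ℕ} (hk : 1 ≤ k) (X : Fin k → Ω → ℝ) (μ σ : ℝ) (hσ : 0 ≤ σ)
    (hmeas : ∀ i, AEMeasurable (X i) volume)
    (hL2 : ∀ i, MemLp (X i) 2 volume)
    (hident : ∀ i j, IdentDistrib (X i) (X j) volume volume)
    (hmean : ∀ i, ∫ ω, X i ω = μ)
    (hvar : ∀ i, variance (X i) volume = σ ^ 2)
    (hsym : ∀ i, IdentDistrib (fun ω => 2 * μ - X i ω) (X i) volume volume)
    (hint : ∀ r, Integrable (orderStat X r) volume)
    (r : ℕ) (hr1 : 1 ≤ r) (hrk : r ≤ k)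
    (hhalf : (r : ℝ) / (k : ℝ) ≤ 1 / 2) :
    μ - σ * Real.sqrt ((k : ℝ) / (2 * (r : ℝ))) ≤ ∫ ω, orderStat X r ω := by
  classical
  have hgcont : Continuous (gfun μ) :=
    ((continuous_const.sub continuous_id).max continuous_const).pow 2
  have i0 : Fin k := ⟨0, hk⟩
  -- integrability of gfun μ ∘ X i
  have hsqint : ∀ i, Integrable (fun ω => (μ - X i ω)^2) volume := by
    intro i
    have h := ((memLp_const (μ := (volume : Measure Ω)) μ).sub (hL2 i)).integrable_sq
    simpa using h
  have hgXint : ∀ i, Integrable (fun ω => gfun μ (X i ω)) volume := by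
    intro i
    refine (hsqint i).mono
      ((hgcont.measurable.comp_aemeasurable (hmeas i)).aestronglyMeasurable) ?_
    filter_upwards with ω
    rw [Real.norm_eq_abs, Real.norm_eq_abs, abs_of_nonneg (sq_nonneg _),
      abs_of_nonneg (sq_nonneg _)]
    exact gfun_le_sq _
  -- value of ∫ gfun μ ∘ X i0
  have hgX0 : ∫ ω, gfun μ (X i0 ω) = σ^2 / 2 := by
    have hid2 : IdentDistrib (fun ω => gfun μ (2*μ - X i0 ω)) (fun ω => gfun μ (X i0 ω))
        volume volume := (hsym i0).comp hgcont.measurable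
    have hsymint : ∫ ω, gfun μ (2*μ - X i0 ω) = ∫ ω, gfun μ (X i0 ω) := hid2.integral_eq
    have hint2 : Integrable (fun ω => gfun μ (2*μ - X i0 ω)) volume :=
      (hid2.integrable_iff).mpr (hgXint i0)
    have hkey : ∀ ω, gfun μ (X i0 ω) + gfun μ (2*μ - X i0 ω) = (X i0 ω - μ)^2 := by
      intro ω
      unfold gfun
      rcases le_total (X i0 ω) μ with h | h
      · rw [max_eq_left (by linarith), max_eq_right (by linarith)]; ring
      · rw [max_eq_right (by linarith), max_eq_left (by linarith)]; ring
    have hvareq : ∫ ω, (X i0 ω - μ)^2 = σ^2 := by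
      have h := variance_eq_integral (hL2 i0).aemeasurable
      rw [hvar i0, hmean i0] at h
      simpa [Pi.pow_apply, Pi.sub_apply] using h.symm
    have hsum : ∫ ω, (gfun μ (X i0 ω) + gfun μ (2*μ - X i0 ω)) =
        (∫ ω, gfun μ (X i0 ω)) + ∫ ω, gfun μ (2*μ - X i0 ω) :=
      integral_add (hgXint i0) hint2
    have heq : ∫ ω, (gfun μ (X i0 ω) + gfun μ (2*μ - X i0 ω)) = σ^2 := by
      rw [← hvareq]; congr 1; funext ω; exact hkey ω
    rw [heq, hsymint] at hsum
    linarith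
  have hgXi : ∀ i, ∫ ω, gfun μ (X i ω) = σ^2/2 := fun i => by
    rw [← hgX0]; exact ((hident i i0).comp hgcont.measurable).integral_eq
  have hsumint : Integrable (fun ω => ∑ i, gfun μ (X i ω)) volume :=
    integrable_finset_sum _ (fun i _ => hgXint i)
  have hsumval : ∫ ω, ∑ i, gfun μ (X i ω) = k * (σ^2/2) := by
    rw [integral_finset_sum _ (fun i _ => hgXint i)]
    simp [hgXi, Finset.sum_const, nsmul_eq_mul]
  -- the q function
  set q : Ω → ℝ := fun ω => max (μ - orderStat X r ω) 0 with hq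
  have hqmeas : AEStronglyMeasurable q volume :=
    ((continuous_const.sub continuous_id).max continuous_const).comp_aestronglyMeasurable
      (hint r).aestronglyMeasurable
  have hq2eq : ∀ ω, q ω ^ 2 = gfun μ (orderStat X r ω) := fun ω => rfl
  have hpt : ∀ ω, (r:ℝ) * q ω ^ 2 ≤ ∑ i, gfun μ (X i ω) := by
    intro ω
    rw [hq2eq]
    exact pointwise r hr1 hrk μ (fun i => X i ω)
  have hq2meas : AEStronglyMeasurable (fun ω => q ω ^ 2) volume :=
    hgcont.comp_aestronglyMeasurable (hint r).aestronglyMeasurable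
  have hq2int : Integrable (fun ω => q ω ^ 2) volume := by
    refine hsumint.mono hq2meas ?_
    filter_upwards with ω
    rw [Real.norm_eq_abs, Real.norm_eq_abs, abs_of_nonneg (sq_nonneg _),
      abs_of_nonneg (Finset.sum_nonneg fun i _ => sq_nonneg _)]
    have h1 : (1:ℝ) * q ω ^ 2 ≤ (r:ℝ) * q ω ^ 2 := by
      apply mul_le_mul_of_nonneg_right _ (sq_nonneg _)
      exact_mod_cast hr1
    linarith [hpt ω]
  have hqL2 : MemLp q 2 volume := (memLp_two_iff_integrable_sq hqmeas).mpr hq2int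
  have hrpos : (0:ℝ) < r := by exact_mod_cast hr1
  have hq2val : ∫ ω, q ω ^ 2 ≤ (k:ℝ)/(2*r) * σ^2 := by
    have h1 : (r:ℝ) * ∫ ω, q ω ^ 2 ≤ (k:ℝ) * (σ^2/2) := by
      rw [← hsumval, ← integral_const_mul]
      exact integral_mono (hq2int.const_mul _) hsumint hpt
    rw [div_mul_eq_mul_div, le_div_iff₀ (by positivity)]
    nlinarith
  have hqint : Integrable q volume := by
    refine (((integrable_const μ).sub (hint r))).mono hqmeas ?_
    filter_upwards with ω
    rw [Real.norm_eq_abs, Real.norm_eq_abs,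
      abs_of_nonneg (le_max_right _ _)]
    exact le_trans (max_le (le_abs_self _) (abs_nonneg _)) le_rfl
  have hEqnn : 0 ≤ ∫ ω, q ω := integral_nonneg (fun ω => le_max_right _ _)
  have hvarq := variance_nonneg q volume
  rw [variance_eq_sub hqL2] at hvarq
  have h2 : (∫ ω, q ω)^2 ≤ ∫ ω, q ω ^ 2 := by
    have : ∫ ω, (q ^ 2) ω = ∫ ω, q ω ^ 2 := by simp [Pi.pow_apply]
    linarith [hvarq, this]
  have h3 : ∫ ω, q ω ≤ Real.sqrt ((k:ℝ)/(2*r) * σ^2) :=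
    (Real.le_sqrt hEqnn (by positivity)).mpr (le_trans h2 hq2val)
  have h4 : Real.sqrt ((k:ℝ)/(2*r) * σ^2) = σ * Real.sqrt ((k:ℝ)/(2*r)) := by
    rw [Real.sqrt_mul (by positivity), Real.sqrt_sq hσ, mul_comm]
  have hfin : μ - ∫ ω, orderStat X r ω ≤ ∫ ω, q ω := by
    have hmono : ∫ ω, (μ - orderStat X r ω) ≤ ∫ ω, q ω :=
      integral_mono ((integrable_const μ).sub (hint r)) hqint (fun ω => le_max_left _ _)
    rwa [integral_sub (integrable_const μ) (hint r), integral_const, probReal_univ,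
      smul_eq_mul, one_mul] at hmono
  rw [← h4] at *
  linarith [h3, hfin, h4]
end

section
/- (Gascuel–Caraux lower bound, second case) If 1 ≤ r ≤ k and r/k ≥ 1/2, then the expected value of the r-th order statistic satisfies E[X_{(r:k)}] ≥ μ − σ·√(k(k−r)/(2r²)). -/
open MeasureTheory ProbabilityTheory

private lemma sum_getD_eq_map_sum (f : ℝ → ℝ) (l : List ℝ) :
    ∑ j ∈ Finset.range l.length, f (l.getD j 0) = (l.map f).sum := by
  induction l with
  | nil => simp
  | cons a t ih =>
    rw [List.length_cons, Finset.sum_range_succ']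
    simp only [List.getD_cons_succ, List.getD_cons_zero, List.map_cons, List.sum_cons, ih]
    ring


/-- Gascuel–Caraux lower bound, second case: if `1 ≤ r ≤ k` and `r/k ≥ 1/2`, then
`E[X_{(r:k)}] ≥ μ − σ·√(k(k−r)/(2r²))`. -/
theorem gascuel_caraux_lower_second {Ω : Type*} [MeasureSpace Ω]
    [IsProbabilityMeasure (volume : Measure Ω)]
    {k : ℕ} (hk : 1 ≤ k) (X : Fin k → Ω → ℝ) (μ σ : ℝ) (hσ : 0 ≤ σ)
    (hmeas : ∀ i, AEMeasurable (X i) volume)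
    (hL2 : ∀ i, MemLp (X i) 2 volume)
    (hident : ∀ i j, IdentDistrib (X i) (X j) volume volume)
    (hmean : ∀ i, ∫ ω, X i ω = μ)
    (hvar : ∀ i, variance (X i) volume = σ ^ 2)
    (hsym : ∀ i, IdentDistrib (fun ω => 2 * μ - X i ω) (X i) volume volume)
    (hint : ∀ r, Integrable (orderStat X r) volume)
    (r : ℕ) (hr1 : 1 ≤ r) (hrk : r ≤ k)
    (hhalf : 1 / 2 ≤ (r : ℝ) / (k : ℝ)) :
    μ - σ * Real.sqrt ((k : ℝ) * ((k : ℝ) - (r : ℝ)) / (2 * (r : ℝ) ^ 2)) ≤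
      ∫ ω, orderStat X r ω := by
  have hrpos : (0:ℝ) < r := by exact_mod_cast hr1
  have hkr : (0:ℝ) ≤ (k:ℝ) - r := by
    have : (r:ℝ) ≤ k := by exact_mod_cast hrk
    linarith
  -- the positive-part-squared functions
  set g : Fin k → Ω → ℝ := fun i ω => max (X i ω - μ) 0 ^ 2 with hg
  set W : Ω → ℝ := fun ω => Real.sqrt (∑ i, g i ω) with hW
  have hgnn : ∀ i ω, 0 ≤ g i ω := fun i ω => sq_nonneg _
  have hWnn : ∀ ω, 0 ≤ W ω := fun ω => Real.sqrt_nonneg _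
  have hgmeas : ∀ i, AEStronglyMeasurable (g i) volume := by
    intro i
    exact (((hmeas i).sub aemeasurable_const).max aemeasurable_const).pow
      aemeasurable_const |>.aestronglyMeasurable
  have hsqint : ∀ i, Integrable (fun ω => (X i ω - μ) ^ 2) volume := fun i =>
    ((hL2 i).sub (memLp_const μ)).integrable_sq
  have hmax_le : ∀ a : ℝ, max a 0 ^ 2 ≤ a ^ 2 := by
    intro a
    rcases le_total a 0 with h | h
    · rw [max_eq_right h]; simpa using sq_nonneg a
    · rw [max_eq_left h]
  have hgint : ∀ i, Integrable (g i) volume := by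
    intro i
    refine (hsqint i).mono (hgmeas i) (Filter.Eventually.of_forall fun ω => ?_)
    rw [Real.norm_eq_abs, Real.norm_eq_abs, abs_of_nonneg (hgnn i ω),
      abs_of_nonneg (sq_nonneg _)]
    exact hmax_le _
  -- ∫ g i = σ^2 / 2
  have hgval : ∀ i, ∫ ω, g i ω = σ ^ 2 / 2 := by
    intro i
    have hf : Measurable (fun x : ℝ => max (x - μ) 0 ^ 2) := by measurability
    have hsymint : ∫ ω, max (X i ω - μ) 0 ^ 2 = ∫ ω, max (μ - X i ω) 0 ^ 2 := by
      have h := ((hsym i).comp hf).integral_eq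
      simp only [Function.comp_def] at h
      rw [← h]
      congr 1 with ω
      ring_nf
    have hg'meas : AEStronglyMeasurable (fun ω => max (μ - X i ω) 0 ^ 2) volume :=
      ((aemeasurable_const.sub (hmeas i)).max aemeasurable_const).pow
        aemeasurable_const |>.aestronglyMeasurable
    have hg'int : Integrable (fun ω => max (μ - X i ω) 0 ^ 2) volume := by
      refine (hsqint i).mono hg'meas (Filter.Eventually.of_forall fun ω => ?_)
      rw [Real.norm_eq_abs, Real.norm_eq_abs, abs_of_nonneg (sq_nonneg _),
        abs_of_nonneg (sq_nonneg _)]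
      calc max (μ - X i ω) 0 ^ 2 ≤ (μ - X i ω) ^ 2 := hmax_le _
        _ = (X i ω - μ) ^ 2 := by ring
    have hvareq : ∫ ω, (X i ω - μ) ^ 2 = σ ^ 2 := by
      rw [← hvar i, variance_eq_integral (hmeas i), ← hmean i]
    have hptw : ∀ ω, g i ω + max (μ - X i ω) 0 ^ 2 = (X i ω - μ) ^ 2 := by
      intro ω
      rcases le_total (X i ω) μ with h | h
      · rw [hg]; simp only
        rw [max_eq_right (by linarith), max_eq_left (by linarith)]
        ring
      · rw [hg]; simp only
        rw [max_eq_left (by linarith), max_eq_right (by linarith)]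
        ring
    have := integral_add (hgint i) hg'int
    have hsum : ∫ ω, (g i ω + max (μ - X i ω) 0 ^ 2) = σ ^ 2 := by
      rw [← hvareq]; congr 1 with ω; exact hptw ω
    rw [this] at hsum
    have : ∫ ω, max (μ - X i ω) 0 ^ 2 = ∫ ω, g i ω := hsymint.symm
    rw [this] at hsum
    linarith
  -- Step C : integral facts about W
  have hWmeas : AEStronglyMeasurable W volume := by
    have hs : AEMeasurable (fun ω => ∑ i, g i ω) volume :=
      Finset.aemeasurable_fun_sum _ fun i _ => (hgmeas i).aemeasurable
    exact (Real.continuous_sqrt.measurable.comp_aemeasurable hs).aestronglyMeasurable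
  have hsumg_int : Integrable (fun ω => ∑ i, g i ω) volume :=
    integrable_finset_sum _ fun i _ => hgint i
  have hWsq : ∀ ω, W ω ^ 2 = ∑ i, g i ω := fun ω =>
    Real.sq_sqrt (Finset.sum_nonneg fun i _ => hgnn i ω)
  have hWsqfun : (fun ω => W ω ^ 2) = fun ω => ∑ i, g i ω := funext hWsq
  have hWsqint : Integrable (fun ω => W ω ^ 2) volume := by rw [hWsqfun]; exact hsumg_int
  have hWmem : MemLp W 2 volume := (memLp_two_iff_integrable_sq hWmeas).2 hWsqint
  have hWint : Integrable W volume := hWmem.integrable one_le_two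
  have hintWsq : ∫ ω, W ω ^ 2 = (k : ℝ) * σ ^ 2 / 2 := by
    rw [hWsqfun, integral_finset_sum _ fun i _ => hgint i]
    simp only [hgval, Finset.sum_const, Finset.card_univ, Fintype.card_fin, nsmul_eq_mul]
    ring
  have hEW : ∫ ω, W ω ≤ Real.sqrt ((k : ℝ) * σ ^ 2 / 2) := by
    have hv := variance_nonneg W volume
    rw [variance_eq_sub hWmem] at hv
    simp only [Pi.pow_apply] at hv
    have h1 : (∫ ω, W ω) ^ 2 ≤ (k : ℝ) * σ ^ 2 / 2 := by
      rw [← hintWsq]; linarith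
    calc ∫ ω, W ω = Real.sqrt ((∫ ω, W ω) ^ 2) :=
          (Real.sqrt_sq (integral_nonneg hWnn)).symm
      _ ≤ _ := Real.sqrt_le_sqrt h1
  -- Step D : pointwise inequality
  have hptw : ∀ ω, (∑ i, X i ω) - ((k : ℝ) - r) * μ ≤
      (r : ℝ) * orderStat X r ω + Real.sqrt ((k : ℝ) - r) * W ω := by
    intro ω
    set l := (List.ofFn fun i => X i ω).mergeSort (fun a b => decide (a ≤ b)) with hl
    have hlen : l.length = k := by rw [hl, List.length_mergeSort, List.length_ofFn]
    have hsorted : l.Pairwise (· ≤ ·) := List.pairwise_mergeSort' _ _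
    have hperm : l.Perm (List.ofFn fun i => X i ω) := List.mergeSort_perm _ _
    have hsumf : ∀ f : ℝ → ℝ, ∑ j ∈ Finset.range k, f (l.getD j 0) = ∑ i, f (X i ω) := by
      intro f
      have h := sum_getD_eq_map_sum f l
      rw [hlen] at h
      rw [h, (hperm.map f).sum_eq, List.map_ofFn, List.sum_ofFn]
      rfl
    have hmono : ∀ j ∈ Finset.range r, l.getD j 0 ≤ l.getD (r - 1) 0 := by
      intro j hj
      have hj' : j ≤ r - 1 := Nat.le_pred_of_lt (Finset.mem_range.1 hj)
      have hr' : r - 1 < l.length := by rw [hlen]; omega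
      rw [List.getD_eq_getElem l 0 (lt_of_le_of_lt hj' hr'), List.getD_eq_getElem l 0 hr']
      exact hsorted.rel_get_of_le hj'
    have hsplit : ∑ j ∈ Finset.range k, l.getD j 0 =
        ∑ j ∈ Finset.range r, l.getD j 0 + ∑ j ∈ Finset.Ico r k, l.getD j 0 := by
      have h0 := Finset.sum_Ico_consecutive (fun j => l.getD j 0) (Nat.zero_le r) hrk
      simp only [← Finset.range_eq_Ico] at h0
      exact h0.symm
    have hb1 : ∑ j ∈ Finset.range r, l.getD j 0 ≤ (r : ℝ) * l.getD (r - 1) 0 := by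
      have h := Finset.sum_le_card_nsmul (Finset.range r) (fun j => l.getD j 0)
        (l.getD (r - 1) 0) hmono
      simpa [Finset.card_range, nsmul_eq_mul] using h
    have hb2 : ∑ j ∈ Finset.Ico r k, (l.getD j 0 - μ) ≤ Real.sqrt ((k : ℝ) - r) * W ω := by
      have step1 : ∑ j ∈ Finset.Ico r k, (l.getD j 0 - μ) ≤
          ∑ j ∈ Finset.Ico r k, max (l.getD j 0 - μ) 0 :=
        Finset.sum_le_sum fun j _ => le_max_left _ _
      set S := ∑ j ∈ Finset.Ico r k, max (l.getD j 0 - μ) 0 with hS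
      have hSnn : 0 ≤ S := Finset.sum_nonneg fun j _ => le_max_right _ _
      have hcast : ((Finset.Ico r k).card : ℝ) = (k : ℝ) - r := by
        rw [Nat.card_Ico, Nat.cast_sub hrk]
      have hsq : S ^ 2 ≤ ((k : ℝ) - r) * ∑ j ∈ Finset.Ico r k, max (l.getD j 0 - μ) 0 ^ 2 := by
        have h := sq_sum_le_card_mul_sum_sq (s := Finset.Ico r k)
          (f := fun j => max (l.getD j 0 - μ) 0)
        rwa [hcast] at h
      have hsub : ∑ j ∈ Finset.Ico r k, max (l.getD j 0 - μ) 0 ^ 2 ≤ ∑ i, g i ω := by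
        calc ∑ j ∈ Finset.Ico r k, max (l.getD j 0 - μ) 0 ^ 2
            ≤ ∑ j ∈ Finset.range k, max (l.getD j 0 - μ) 0 ^ 2 :=
              Finset.sum_le_sum_of_subset_of_nonneg
                (by rw [Finset.range_eq_Ico]; exact Finset.Ico_subset_Ico (Nat.zero_le r) le_rfl)
                (fun j _ _ => sq_nonneg _)
          _ = ∑ i, g i ω := hsumf fun x => max (x - μ) 0 ^ 2
      have hfin : S ^ 2 ≤ ((k : ℝ) - r) * W ω ^ 2 := by
        rw [hWsq]
        exact hsq.trans (mul_le_mul_of_nonneg_left hsub hkr)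
      calc ∑ j ∈ Finset.Ico r k, (l.getD j 0 - μ) ≤ S := step1
        _ = Real.sqrt (S ^ 2) := (Real.sqrt_sq hSnn).symm
        _ ≤ Real.sqrt (((k : ℝ) - r) * W ω ^ 2) := Real.sqrt_le_sqrt hfin
        _ = Real.sqrt ((k : ℝ) - r) * W ω := by
            rw [Real.sqrt_mul hkr, Real.sqrt_sq (hWnn ω)]
    have hOrd : orderStat X r ω = l.getD (r - 1) 0 := rfl
    have hsum_id : ∑ j ∈ Finset.range k, l.getD j 0 = ∑ i, X i ω := by
      simpa using hsumf id
    have hb2' : ∑ j ∈ Finset.Ico r k, l.getD j 0 ≤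
        ((k : ℝ) - r) * μ + Real.sqrt ((k : ℝ) - r) * W ω := by
      have h := hb2
      rw [Finset.sum_sub_distrib, Finset.sum_const, nsmul_eq_mul] at h
      rw [Nat.card_Ico, Nat.cast_sub hrk] at h
      linarith
    rw [hOrd]
    linarith
  -- Step E : integrate
  have hXint : ∀ i : Fin k, Integrable (X i) volume := fun i => (hL2 i).integrable one_le_two
  have hLint : Integrable (fun ω => (∑ i, X i ω) - ((k : ℝ) - r) * μ) volume :=
    (integrable_finset_sum _ fun i _ => hXint i).sub (integrable_const _)
  have hRint : Integrable
      (fun ω => (r : ℝ) * orderStat X r ω + Real.sqrt ((k : ℝ) - r) * W ω) volume :=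
    ((hint r).const_mul _).add (hWint.const_mul _)
  have hmono2 := integral_mono hLint hRint hptw
  rw [integral_sub (integrable_finset_sum _ fun i _ => hXint i) (integrable_const _),
    integral_finset_sum _ fun i _ => hXint i, integral_add ((hint r).const_mul _)
    (hWint.const_mul _), integral_const_mul, integral_const_mul, integral_const] at hmono2
  simp only [integral_const_mul] at hmono2
  simp only [hmean, Finset.sum_const, Finset.card_univ, Fintype.card_fin, nsmul_eq_mul,
    measure_univ, probReal_univ, ENNReal.toReal_one, smul_eq_mul, one_mul] at hmono2
  -- hmono2 : k * μ - ((k:ℝ) - r) * μ ≤ r * ∫ orderStat + √(k-r) * ∫ W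
  have hbound : Real.sqrt ((k : ℝ) - r) * ∫ ω, W ω ≤
      σ * Real.sqrt ((k : ℝ) * ((k : ℝ) - r) / 2) := by
    have h1 : Real.sqrt ((k : ℝ) - r) * ∫ ω, W ω ≤
        Real.sqrt ((k : ℝ) - r) * Real.sqrt ((k : ℝ) * σ ^ 2 / 2) :=
      mul_le_mul_of_nonneg_left hEW (Real.sqrt_nonneg _)
    have h2 : Real.sqrt ((k : ℝ) - r) * Real.sqrt ((k : ℝ) * σ ^ 2 / 2) =
        σ * Real.sqrt ((k : ℝ) * ((k : ℝ) - r) / 2) := by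
      rw [← Real.sqrt_mul hkr]
      rw [show ((k : ℝ) - r) * ((k : ℝ) * σ ^ 2 / 2) = σ ^ 2 * ((k : ℝ) * ((k : ℝ) - r) / 2) by ring]
      rw [Real.sqrt_mul (sq_nonneg σ), Real.sqrt_sq hσ]
    linarith
  have hfinal : (r : ℝ) * μ - σ * Real.sqrt ((k : ℝ) * ((k : ℝ) - r) / 2) ≤
      (r : ℝ) * ∫ ω, orderStat X r ω := by linarith
  have hsqrteq : Real.sqrt ((k : ℝ) * ((k : ℝ) - r) / (2 * (r : ℝ) ^ 2)) =
      Real.sqrt ((k : ℝ) * ((k : ℝ) - r) / 2) / r := by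
    rw [show (k : ℝ) * ((k : ℝ) - r) / (2 * (r : ℝ) ^ 2) =
      ((k : ℝ) * ((k : ℝ) - r) / 2) / (r : ℝ) ^ 2 by ring]
    rw [Real.sqrt_div (by positivity), Real.sqrt_sq hrpos.le]
  rw [hsqrteq]
  have hI : (μ - ∫ ω, orderStat X r ω) * r ≤ σ * Real.sqrt ((k : ℝ) * ((k : ℝ) - r) / 2) := by
    nlinarith [hfinal]
  have hdiv : μ - ∫ ω, orderStat X r ω ≤
      σ * Real.sqrt ((k : ℝ) * ((k : ℝ) - r) / 2) / r := (le_div_iff₀ hrpos).2 hI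
  have : σ * (Real.sqrt ((k : ℝ) * ((k : ℝ) - r) / 2) / r) =
      σ * Real.sqrt ((k : ℝ) * ((k : ℝ) - r) / 2) / r := by ring
  linarith
end

section
/- (Gascuel–Caraux upper bound, first case) If 1 ≤ r ≤ k and (r−1)/k ≥ 1/2, then the expected value of the r-th order statistic satisfies E[X_{(r:k)}] ≤ μ + σ·√(k/(2(k−r+1))). -/
open MeasureTheory ProbabilityTheory

open Finset in
/-- Pointwise: `(k-r+1) * (X_{(r)} - t)₊ ≤ ∑ᵢ (Xᵢ - t)₊`. -/
lemma sum_max_ge_aux {k r : ℕ} (hr1 : 1 ≤ r) (hrk : r ≤ k) (y : Fin k → ℝ) (t : ℝ) :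
    ((k - r + 1 : ℕ) : ℝ) *
      max (((List.ofFn y).mergeSort (fun a b => decide (a ≤ b))).getD (r-1) 0 - t) 0
      ≤ ∑ i, max (y i - t) 0 := by
  classical
  set l := (List.ofFn y).mergeSort (fun a b => decide (a ≤ b)) with hl
  have hlen : l.length = k := by rw [hl, List.length_mergeSort, List.length_ofFn]
  have hperm : l.Perm (List.ofFn y) := List.mergeSort_perm _ _
  have hsort : l.Pairwise (fun a b => decide (a ≤ b) = true) :=
    List.pairwise_mergeSort (fun a b c => by simpa using le_trans)
      (fun a b => by simpa using le_total a b) _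
  have hsort' : ∀ i j : Fin l.length, (i:ℕ) ≤ (j:ℕ) → l.get i ≤ l.get j := by
    intro i j hij
    rcases eq_or_lt_of_le hij with h | h
    · have : i = j := Fin.ext h
      simp [this]
    · simpa using List.pairwise_iff_get.1 hsort i j h
  set f : ℝ → ℝ := fun z => max (z - t) 0 with hf
  have hfmono : Monotone f := fun a b hab => max_le_max (by linarith) le_rfl
  have hfnonneg : ∀ z, 0 ≤ f z := fun z => le_max_right _ _
  have h1 : ∑ i, f (y i) = ((List.ofFn y).map f).sum := by
    rw [List.map_ofFn, List.sum_ofFn]; rfl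
  have h2 : ((List.ofFn y).map f).sum = (l.map f).sum := ((hperm.map f).sum_eq).symm
  have h3 : (l.map f).sum = ∑ j : Fin l.length, f (l.get j) := by
    conv_lhs => rw [← List.ofFn_get l]
    rw [List.map_ofFn, List.sum_ofFn]; rfl
  have h4 : (∑ j : Fin l.length, f (l.get j)) = ∑ j ∈ range k, f (l.getD j 0) := by
    rw [← hlen, ← Fin.sum_univ_eq_sum_range]
    refine Finset.sum_congr rfl fun j _ => ?_
    rw [List.getD_eq_getElem l 0 (by have := j.2; omega)]
    rfl
  have hrlt : r - 1 < l.length := by omega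
  have hs : l.getD (r-1) 0 = l.get ⟨r-1, hrlt⟩ := by
    rw [List.getD_eq_getElem l 0 hrlt]; rfl
  have h5 : ∑ j ∈ Finset.Ico (r-1) k, f (l.getD j 0) ≤ ∑ j ∈ range k, f (l.getD j 0) := by
    apply Finset.sum_le_sum_of_subset_of_nonneg
    · intro x hx; simp only [Finset.mem_Ico] at hx; exact Finset.mem_range.2 hx.2
    · intro i _ _; exact hfnonneg _
  have h6 : ((k - r + 1 : ℕ) : ℝ) * f (l.getD (r-1) 0)
      ≤ ∑ j ∈ Finset.Ico (r-1) k, f (l.getD j 0) := by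
    have hcard : (Finset.Ico (r-1) k).card = k - r + 1 := by
      rw [Nat.card_Ico]; omega
    calc ((k - r + 1 : ℕ) : ℝ) * f (l.getD (r-1) 0)
        = ∑ _j ∈ Finset.Ico (r-1) k, f (l.getD (r-1) 0) := by
          rw [Finset.sum_const, hcard, nsmul_eq_mul]
      _ ≤ ∑ j ∈ Finset.Ico (r-1) k, f (l.getD j 0) := by
          refine Finset.sum_le_sum fun j hj => ?_
          simp only [Finset.mem_Ico] at hj
          have hjlt : j < l.length := by omega
          rw [hs, List.getD_eq_getElem l 0 hjlt]
          exact hfmono (hsort' ⟨r-1, hrlt⟩ ⟨j, hjlt⟩ hj.1)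
  calc ((k - r + 1 : ℕ) : ℝ) * f (l.getD (r-1) 0)
      ≤ ∑ j ∈ range k, f (l.getD j 0) := le_trans h6 h5
    _ = ∑ i, f (y i) := by rw [h1, h2, h3, h4]

/-- Pointwise: `(z-a)₊ ≤ (z₊)²/(4a)` for `a > 0`. -/
lemma max_sub_le_sq_aux {a : ℝ} (ha : 0 < a) (z : ℝ) :
    max (z - a) 0 ≤ (max z 0)^2 / (4*a) := by
  rcases le_total z 0 with h | h
  · rw [max_eq_right (by linarith : z - a ≤ 0)]
    positivity
  · rw [max_eq_left h]
    apply max_le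
    · rw [le_div_iff₀ (by linarith : (0:ℝ) < 4*a)]
      nlinarith [sq_nonneg (z - 2*a)]
    · positivity

/-- Gascuel–Caraux upper bound, first case: if `1 ≤ r ≤ k` and `(r−1)/k ≥ 1/2`, then
`E[X_{(r:k)}] ≤ μ + σ·√(k/(2(k−r+1)))`. -/
theorem gascuel_caraux_upper_first {Ω : Type*} [MeasureSpace Ω]
    [IsProbabilityMeasure (volume : Measure Ω)]
    {k : ℕ} (hk : 1 ≤ k) (X : Fin k → Ω → ℝ) (μ σ : ℝ) (hσ : 0 ≤ σ)
    (hmeas : ∀ i, AEMeasurable (X i) volume)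
    (hL2 : ∀ i, MemLp (X i) 2 volume)
    (hident : ∀ i j, IdentDistrib (X i) (X j) volume volume)
    (hmean : ∀ i, ∫ ω, X i ω = μ)
    (hvar : ∀ i, variance (X i) volume = σ ^ 2)
    (hsym : ∀ i, IdentDistrib (fun ω => 2 * μ - X i ω) (X i) volume volume)
    (hint : ∀ r, Integrable (orderStat X r) volume)
    (r : ℕ) (hr1 : 1 ≤ r) (hrk : r ≤ k)
    (hhalf : 1 / 2 ≤ ((r : ℝ) - 1) / (k : ℝ)) :
    ∫ ω, orderStat X r ω ≤
      μ + σ * Real.sqrt ((k : ℝ) / (2 * ((k : ℝ) - (r : ℝ) + 1))) := by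
  have hkpos : (0:ℝ) < (k:ℝ) := by exact_mod_cast hk
  have hrkR : (r:ℝ) ≤ (k:ℝ) := by exact_mod_cast hrk
  have hD : (0:ℝ) < (k:ℝ) - r + 1 := by linarith
  set i0 : Fin k := ⟨0, hk⟩ with hi0
  set Z : Ω → ℝ := fun ω => X i0 ω - μ with hZ
  have hZmeas : AEMeasurable Z volume := (hmeas i0).sub aemeasurable_const
  have hZ2 : MemLp Z 2 volume := (hL2 i0).sub (memLp_const μ)
  have hZsq_int : Integrable (fun ω => Z ω ^ 2) volume := hZ2.integrable_sq
  -- ∫ Z² = σ²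
  have hZvar : ∫ ω, Z ω ^ 2 = σ ^ 2 := by
    have h := variance_eq_integral (hmeas i0)
    rw [hvar i0, hmean i0] at h
    rw [h]
  -- Integrability of (max Z 0)^2 and (max (-Z) 0)^2
  have hcontsq : Continuous (fun z : ℝ => (max z 0) ^ 2) :=
    ((continuous_id.max continuous_const).pow 2)
  have hgZmeas : AEStronglyMeasurable (fun ω => (max (Z ω) 0) ^ 2) volume :=
    ((hZmeas.max aemeasurable_const).pow_const 2).aestronglyMeasurable
  have hgZmeas' : AEStronglyMeasurable (fun ω => (max (-Z ω) 0) ^ 2) volume :=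
    ((hZmeas.neg.max aemeasurable_const).pow_const 2).aestronglyMeasurable
  have hboundsq : ∀ z : ℝ, ‖(max z 0)^2‖ ≤ z^2 := by
    intro z
    rw [Real.norm_eq_abs, abs_of_nonneg (sq_nonneg _)]
    rcases le_total z 0 with h | h
    · rw [max_eq_right h]; simpa using sq_nonneg z
    · rw [max_eq_left h]
  have hgZ_int : Integrable (fun ω => (max (Z ω) 0) ^ 2) volume :=
    hZsq_int.mono' hgZmeas (Filter.Eventually.of_forall fun ω => hboundsq (Z ω))
  have hgZ_int' : Integrable (fun ω => (max (-Z ω) 0) ^ 2) volume := by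
    refine hZsq_int.mono' hgZmeas' (Filter.Eventually.of_forall fun ω => ?_)
    calc ‖(max (-Z ω) 0)^2‖ ≤ (-Z ω)^2 := hboundsq _
      _ = Z ω ^ 2 := by ring
  -- symmetry: -Z has same law as Z
  have hnegZ : IdentDistrib (fun ω => -Z ω) Z volume volume := by
    have hg : Measurable (fun x : ℝ => x - μ) := by
      exact measurable_id.sub measurable_const
    have h := (hsym i0).comp hg
    have e1 : ((fun x : ℝ => x - μ) ∘ (fun ω => 2 * μ - X i0 ω)) = fun ω => -Z ω := by
      funext ω; simp only [Function.comp_apply, hZ]; ring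
    have e2 : ((fun x : ℝ => x - μ) ∘ X i0) = Z := by
      funext ω; simp only [Function.comp_apply, hZ]
    rwa [e1, e2] at h
  -- half-variance identity
  have hhalfvar : ∫ ω, (max (Z ω) 0) ^ 2 = σ ^ 2 / 2 := by
    have hmeasg : Measurable (fun z : ℝ => (max z 0) ^ 2) := hcontsq.measurable
    have hEq : ∫ ω, (max (-Z ω) 0) ^ 2 = ∫ ω, (max (Z ω) 0) ^ 2 :=
      (hnegZ.comp hmeasg).integral_eq
    have hsum : ∫ ω, ((max (Z ω) 0) ^ 2 + (max (-Z ω) 0) ^ 2) = σ ^ 2 := by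
      rw [← hZvar]
      apply integral_congr_ae
      refine Filter.Eventually.of_forall fun ω => ?_
      show (max (Z ω) 0) ^ 2 + (max (-Z ω) 0) ^ 2 = Z ω ^ 2
      rcases le_total (Z ω) 0 with h | h
      · rw [max_eq_right h, max_eq_left (by linarith)]; ring
      · rw [max_eq_left h, max_eq_right (by linarith)]; ring
    rw [integral_add hgZ_int hgZ_int', hEq] at hsum
    linarith
  -- tail bound
  have htail : ∀ a : ℝ, 0 < a → ∫ ω, max (Z ω - a) 0 ≤ σ ^ 2 / (8 * a) := by
    intro a ha
    have hmeasf : AEStronglyMeasurable (fun ω => max (Z ω - a) 0) volume :=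
      (((hZmeas.sub aemeasurable_const).max aemeasurable_const)).aestronglyMeasurable
    have hbd : ∀ ω, ‖max (Z ω - a) 0‖ ≤ (max (Z ω) 0) ^ 2 / (4 * a) := by
      intro ω
      rw [Real.norm_eq_abs, abs_of_nonneg (le_max_right _ _)]
      exact max_sub_le_sq_aux ha (Z ω)
    have hfint : Integrable (fun ω => max (Z ω - a) 0) volume :=
      (hgZ_int.div_const (4 * a)).mono' hmeasf (Filter.Eventually.of_forall hbd)
    calc ∫ ω, max (Z ω - a) 0 ≤ ∫ ω, (max (Z ω) 0) ^ 2 / (4 * a) := by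
          refine integral_mono hfint (hgZ_int.div_const _) fun ω => ?_
          exact max_sub_le_sq_aux ha (Z ω)
      _ = σ ^ 2 / (8 * a) := by
          rw [integral_div, hhalfvar]; ring
  -- main intermediate bound
  have hcast : ((k - r + 1 : ℕ) : ℝ) = (k:ℝ) - r + 1 := by
    push_cast [Nat.sub_add_cancel, Nat.cast_sub hrk]; ring
  have hkey : ∀ a : ℝ, 0 < a →
      ∫ ω, orderStat X r ω ≤ μ + a + ((k:ℝ) - r + 1)⁻¹ * ((k:ℝ) * (σ^2 / (8*a))) := by
    intro a ha
    set t : ℝ := μ + a with ht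
    -- integrability of each (X i - t)₊
    have hXint : ∀ i, Integrable (X i) volume := fun i =>
      ((hL2 i).mono_exponent one_le_two).integrable le_rfl
    have hmaxint : ∀ i : Fin k, Integrable (fun ω => max (X i ω - t) 0) volume := by
      intro i
      have hm : AEStronglyMeasurable (fun ω => max (X i ω - t) 0) volume :=
        ((((hmeas i).sub aemeasurable_const).max aemeasurable_const)).aestronglyMeasurable
      refine ((hXint i).abs.add (integrable_const |t|)).mono' hm
        (Filter.Eventually.of_forall fun ω => ?_)
      rw [Real.norm_eq_abs, abs_of_nonneg (le_max_right _ _)]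
      apply max_le
      · calc X i ω - t ≤ |X i ω - t| := le_abs_self _
          _ ≤ |X i ω| + |t| := abs_sub _ _
      · exact add_nonneg (abs_nonneg _) (abs_nonneg _)
    -- pointwise bound
    have hpt : ∀ ω, orderStat X r ω ≤ t + ((k:ℝ) - r + 1)⁻¹ * ∑ i, max (X i ω - t) 0 := by
      intro ω
      have h := sum_max_ge_aux hr1 hrk (fun i => X i ω) t
      rw [hcast] at h
      have h2 : orderStat X r ω - t ≤ max (orderStat X r ω - t) 0 := le_max_left _ _
      have h3 : max (orderStat X r ω - t) 0 ≤ ((k:ℝ) - r + 1)⁻¹ * ∑ i, max (X i ω - t) 0 := by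
        rw [← mul_le_mul_iff_right₀ hD, ← mul_assoc, mul_inv_cancel₀ hD.ne', one_mul]
        exact h
      linarith [h2.trans h3]
    -- integrate
    have hRHSint : Integrable (fun ω => t + ((k:ℝ) - r + 1)⁻¹ * ∑ i, max (X i ω - t) 0)
        volume := by
      apply (integrable_const t).add
      exact (integrable_finset_sum Finset.univ (fun i _ => hmaxint i)).const_mul _
    have hI : ∫ ω, orderStat X r ω
        ≤ ∫ ω, (t + ((k:ℝ) - r + 1)⁻¹ * ∑ i, max (X i ω - t) 0) :=
      integral_mono (hint r) hRHSint hpt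
    have hIval : ∫ ω, (t + ((k:ℝ) - r + 1)⁻¹ * ∑ i, max (X i ω - t) 0)
        = t + ((k:ℝ) - r + 1)⁻¹ * ∑ i : Fin k, ∫ ω, max (X i ω - t) 0 := by
      rw [integral_add (integrable_const t)
        ((integrable_finset_sum Finset.univ (fun i _ => hmaxint i)).const_mul _),
        integral_const, probReal_univ, one_smul,
        integral_const_mul, integral_finset_sum Finset.univ (fun i _ => hmaxint i)]
    -- identical distribution
    have hsame : ∀ i : Fin k, ∫ ω, max (X i ω - t) 0 = ∫ ω, max (Z ω - a) 0 := by
      intro i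
      have hm : Measurable (fun x : ℝ => max (x - t) 0) :=
        (measurable_id.sub measurable_const).max measurable_const
      have h := ((hident i i0).comp hm).integral_eq
      simp only [Function.comp] at h
      rw [h]
      apply integral_congr_ae
      refine Filter.Eventually.of_forall fun ω => ?_
      show max (X i0 ω - t) 0 = max (Z ω - a) 0
      have : X i0 ω - t = Z ω - a := by rw [hZ, ht]; ring
      rw [this]
    have hsum : ∑ i : Fin k, ∫ ω, max (X i ω - t) 0 = (k:ℝ) * ∫ ω, max (Z ω - a) 0 := by
      rw [Finset.sum_congr rfl (fun i _ => hsame i), Finset.sum_const, Finset.card_univ,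
        Fintype.card_fin, nsmul_eq_mul]
    calc ∫ ω, orderStat X r ω
        ≤ t + ((k:ℝ) - r + 1)⁻¹ * ∑ i : Fin k, ∫ ω, max (X i ω - t) 0 := by
          rw [← hIval]; exact hI
      _ = t + ((k:ℝ) - r + 1)⁻¹ * ((k:ℝ) * ∫ ω, max (Z ω - a) 0) := by rw [hsum]
      _ ≤ μ + a + ((k:ℝ) - r + 1)⁻¹ * ((k:ℝ) * (σ^2 / (8*a))) := by
          rw [ht]
          gcongr
          exact htail a ha
  -- conclude
  rcases eq_or_lt_of_le hσ with hσ0 | hσpos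
  · -- σ = 0
    have h0 : ∫ ω, orderStat X r ω ≤ μ := by
      apply le_of_forall_pos_le_add
      intro ε hε
      have := hkey ε hε
      rw [← hσ0] at this
      simpa using this
    calc ∫ ω, orderStat X r ω ≤ μ := h0
      _ ≤ μ + σ * Real.sqrt ((k:ℝ) / (2 * ((k:ℝ) - r + 1))) := by
          have : 0 ≤ σ * Real.sqrt ((k:ℝ) / (2 * ((k:ℝ) - r + 1))) := by positivity
          linarith
  · -- σ > 0
    set s : ℝ := Real.sqrt ((k:ℝ) / (2 * ((k:ℝ) - r + 1))) with hsdef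
    have harg : (0:ℝ) < (k:ℝ) / (2 * ((k:ℝ) - r + 1)) := by positivity
    have hspos : 0 < s := Real.sqrt_pos.2 harg
    have hs2 : s ^ 2 = (k:ℝ) / (2 * ((k:ℝ) - r + 1)) := Real.sq_sqrt harg.le
    have hs2' : s ^ 2 * (2 * ((k:ℝ) - r + 1)) = (k:ℝ) := by
      rw [hs2]; field_simp
    have ha : 0 < σ * s / 2 := by positivity
    have h := hkey (σ * s / 2) ha
    have heq : ((k:ℝ) - r + 1)⁻¹ * ((k:ℝ) * (σ^2 / (8*(σ * s / 2)))) = σ * s / 2 := by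
      have hσne : σ ≠ 0 := hσpos.ne'
      have hsne : s ≠ 0 := hspos.ne'
      have hDne : ((k:ℝ) - r + 1) ≠ 0 := hD.ne'
      field_simp
      linear_combination (-4) * hs2'
    rw [heq] at h
    linarith
end

section
/- (Gascuel–Caraux upper bound, second case) If 1 ≤ r ≤ k and (r−1)/k ≤ 1/2, then the expected value of the r-th order statistic satisfies E[X_{(r:k)}] ≤ μ + σ·√(k(r−1)/(2(k−r+1)²)). -/
open MeasureTheory ProbabilityTheory

open Set
open scoped ENNReal

lemma list_sum_getD (f : ℝ → ℝ) : ∀ (l : List ℝ),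
    (l.map f).sum = ∑ j ∈ Finset.range l.length, f (l.getD j 0)
  | [] => by simp
  | a :: t => by
    rw [List.map_cons, List.sum_cons, List.length_cons, Finset.sum_range_succ',
      list_sum_getD f t]
    simp [add_comm]

lemma key_pointwise {k : ℕ} (v : Fin k → ℝ) {r : ℕ} (hr1 : 1 ≤ r) (hrk : r ≤ k) (c : ℝ) :
    ((k:ℝ) - r + 1) * (((List.ofFn v).mergeSort (fun a b => decide (a ≤ b))).getD (r-1) 0 - c)
      ≤ ∑ i, max (v i - c) 0 := by
  set le := fun a b : ℝ => decide (a ≤ b) with hle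
  set l := (List.ofFn v).mergeSort le with hl
  have hlen : l.length = k := by simp [hl]
  have hsort : l.Pairwise (fun a b => le a b) := by
    exact List.pairwise_mergeSort (fun a b c => by simp only [hle, decide_eq_true_eq]; exact le_trans)
      (fun a b => by simp [hle, le_total]) _
  have hmono : ∀ (i j : ℕ), i ≤ j → j < k → l.getD i 0 ≤ l.getD j 0 := by
    intro i j hij hj
    rcases eq_or_lt_of_le hij with rfl | hij'
    · exact le_refl _
    · have hjl : j < l.length := hlen ▸ hj
      have hil : i < l.length := lt_trans hij' hjl
      rw [List.getD_eq_getElem _ _ hil, List.getD_eq_getElem _ _ hjl]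
      have := List.pairwise_iff_getElem.mp hsort i j hil hjl hij'
      simpa [hle] using this
  set t := l.getD (r-1) 0 with ht
  -- sum over Fin k equals sum over range of sorted list
  have hsum : ∑ i, max (v i - c) 0 = ∑ j ∈ Finset.range k, max (l.getD j 0 - c) 0 := by
    have h1 : ∑ i, max (v i - c) 0 = ((List.ofFn v).map (fun x => max (x - c) 0)).sum := by
      rw [List.map_ofFn, List.sum_ofFn]; rfl
    have h2 : ((List.ofFn v).map (fun x => max (x - c) 0)).sum
        = (l.map (fun x => max (x - c) 0)).sum :=
      (List.Perm.sum_eq (List.Perm.map _ (List.mergeSort_perm _ _))).symm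
    rw [h1, h2, list_sum_getD, hlen]
  rw [hsum]
  have hsub : Finset.Ico (r-1) k ⊆ Finset.range k := by
    rw [Finset.range_eq_Ico]; exact Finset.Ico_subset_Ico (Nat.zero_le _) (le_refl _)
  have hstep : ∑ j ∈ Finset.Ico (r-1) k, max (l.getD j 0 - c) 0
      ≤ ∑ j ∈ Finset.range k, max (l.getD j 0 - c) 0 :=
    Finset.sum_le_sum_of_subset_of_nonneg hsub (fun j _ _ => le_max_right _ _)
  refine le_trans ?_ hstep
  have hterm : ∀ j ∈ Finset.Ico (r-1) k, (t - c) ≤ max (l.getD j 0 - c) 0 := by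
    intro j hj
    rw [Finset.mem_Ico] at hj
    exact le_trans (by linarith [hmono (r-1) j hj.1 hj.2]) (le_max_left _ _)
  calc ((k:ℝ) - r + 1) * (t - c) = (Finset.Ico (r-1) k).card * (t - c) := by
        rw [Nat.card_Ico]
        congr 1
        have : (1:ℕ) ≤ r := hr1
        push_cast [Nat.cast_sub (le_trans (Nat.sub_le r 1) hrk)]
        push_cast [Nat.cast_sub hr1]
        ring
    _ = ∑ _j ∈ Finset.Ico (r-1) k, (t - c) := by rw [Finset.sum_const, nsmul_eq_mul]
    _ ≤ ∑ j ∈ Finset.Ico (r-1) k, max (l.getD j 0 - c) 0 := Finset.sum_le_sum hterm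


set_option maxHeartbeats 2000000 in
lemma quantile_bound (ν : Measure ℝ) [IsProbabilityMeasure ν] (μ σ p : ℝ)
    (hσ : 0 ≤ σ) (hid2 : MemLp (id : ℝ → ℝ) 2 ν)
    (hmean : ∫ x, x ∂ν = μ) (hvar : ∫ x, (x - μ)^2 ∂ν ≤ σ^2)
    (hsym : ν.map (fun x => 2*μ - x) = ν)
    (hp0 : 0 < p) (hp : p ≤ 1/2) :
    ∃ c : ℝ, ∫ x, max (x - c) 0 ∂ν ≤ (μ - c)*(1 - p) + σ * Real.sqrt (p/2) := by
  classical
  set F : ℝ → ℝ := fun t => (ν (Iic t)).toReal with hF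
  have hfin : ∀ s : Set ℝ, ν s ≠ ⊤ := fun s => measure_ne_top ν s
  have hFmono : Monotone F := fun a b hab =>
    ENNReal.toReal_mono (hfin _) (measure_mono (Iic_subset_Iic.mpr hab))
  -- symmetry: ν (Iic μ) = ν (Ici μ)
  have hIicIci : ν (Iic μ) = ν (Ici μ) := by
    conv_rhs => rw [← hsym]
    rw [Measure.map_apply (by fun_prop) measurableSet_Ici]
    congr 1
    ext x
    simp only [mem_Iic, mem_preimage, mem_Ici]
    constructor <;> intro h <;> linarith
  have hFμ : 1/2 ≤ F μ := by
    have hcover : (univ : Set ℝ) ⊆ Iic μ ∪ Ici μ := fun x _ => (le_or_gt x μ).imp id le_of_lt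
    have h1 : (1:ℝ≥0∞) ≤ ν (Iic μ) + ν (Ici μ) := by
      calc (1:ℝ≥0∞) = ν univ := (measure_univ (μ := ν)).symm
        _ ≤ ν (Iic μ ∪ Ici μ) := measure_mono hcover
        _ ≤ ν (Iic μ) + ν (Ici μ) := measure_union_le _ _
    rw [← hIicIci] at h1
    have := ENNReal.toReal_mono (by finiteness) h1
    rw [ENNReal.toReal_add (hfin _) (hfin _)] at this
    simp only [ENNReal.toReal_one] at this
    simp only [hF]; linarith
  set A : Set ℝ := {t | p ≤ F t} with hA
  have hμA : μ ∈ A := le_trans hp hFμ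
  have hAne : A.Nonempty := ⟨μ, hμA⟩
  have hbdd : BddBelow A := by
    -- find t₀ with F t₀ < p
    have htend : Filter.Tendsto (fun n : ℕ => ν (Iic (-(n:ℝ)))) Filter.atTop (nhds (ν (⋂ n : ℕ, Iic (-(n:ℝ))))) :=
      tendsto_measure_iInter_atTop (fun n => (measurableSet_Iic).nullMeasurableSet)
        (fun a b hab => Iic_subset_Iic.mpr (by have : (a:ℝ) ≤ b := Nat.cast_le.mpr hab; linarith))
        ⟨0, hfin _⟩
    have hempty : (⋂ n : ℕ, Iic (-(n:ℝ))) = ∅ := by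
      ext x; simp only [mem_iInter, mem_Iic, mem_empty_iff_false, iff_false, not_forall, not_le]
      obtain ⟨n, hn⟩ := exists_nat_gt (-x)
      exact ⟨n, by linarith⟩
    rw [hempty, measure_empty] at htend
    have : ∀ᶠ n : ℕ in Filter.atTop, ν (Iic (-(n:ℝ))) < ENNReal.ofReal p :=
      htend (ENNReal.nhds_zero_basis.mem_of_mem (by simp [ENNReal.ofReal_pos.mpr hp0]))
    obtain ⟨n, hn⟩ := this.exists
    refine ⟨-(n:ℝ), fun a ha => ?_⟩
    by_contra hcon
    push_neg at hcon
    have : F a ≤ F (-(n:ℝ)) := hFmono hcon.le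
    have h2 : F (-(n:ℝ)) < p := by
      have := ENNReal.toReal_lt_toReal (hfin _) (by finiteness) |>.mpr hn
      rwa [ENNReal.toReal_ofReal hp0.le] at this
    exact absurd (le_trans ha this) (not_le.mpr h2)
  set c := sInf A with hc
  have hcμ : c ≤ μ := csInf_le hbdd hμA
  have hFc : p ≤ F c := by
    have hiInter : (⋂ n : ℕ, Iic (c + 1/(n+1))) = Iic c := by
      ext x
      simp only [mem_iInter, mem_Iic]
      constructor
      · intro h
        refine le_of_forall_pos_le_add fun ε hε => ?_
        obtain ⟨n, hn⟩ := exists_nat_one_div_lt hε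
        exact le_trans (h n) (by have := hn.le; push_cast at this ⊢; linarith)
      · intro h n
        have : (0:ℝ) < 1/(n+1) := by positivity
        linarith
    have htend : Filter.Tendsto (fun n : ℕ => ν (Iic (c + 1/(n+1)))) Filter.atTop
        (nhds (ν (Iic c))) := by
      have := tendsto_measure_iInter_atTop (μ := ν)
        (s := fun n : ℕ => Iic (c + 1/(n+1)))
        (fun n => measurableSet_Iic.nullMeasurableSet)
        (fun a b hab => Iic_subset_Iic.mpr (by
          have h1 : (a:ℝ) ≤ b := Nat.cast_le.mpr hab
          have h2 : (0:ℝ) < a + 1 := by positivity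
          have h3 : (0:ℝ) < b + 1 := by positivity
          have : (1:ℝ)/(b+1) ≤ 1/(a+1) := by
            apply one_div_le_one_div_of_le h2
            linarith
          linarith))
        ⟨0, hfin _⟩
      rwa [hiInter] at this
    have hev : ∀ n : ℕ, ENNReal.ofReal p ≤ ν (Iic (c + 1/(n+1))) := by
      intro n
      have hlt : c < c + 1/(n+1) := by
        have : (0:ℝ) < 1/(n+1) := by positivity
        linarith
      obtain ⟨a, haA, ha⟩ := (csInf_lt_iff hbdd hAne).mp (hc ▸ hlt)
      have : p ≤ F (c + 1/(n+1)) := le_trans haA (hFmono ha.le)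
      exact ENNReal.ofReal_le_of_le_toReal this
    have := ge_of_tendsto' htend hev
    have h2 := ENNReal.toReal_mono (hfin _) this
    rwa [ENNReal.toReal_ofReal hp0.le] at h2
  have hIio : (ν (Iio c)).toReal ≤ p := by
    have hiUnion : (⋃ n : ℕ, Iic (c - 1/(n+1))) = Iio c := by
      ext x
      simp only [mem_iUnion, mem_Iic, mem_Iio]
      constructor
      · rintro ⟨n, hn⟩
        have : (0:ℝ) < 1/(n+1) := by positivity
        linarith
      · intro h
        obtain ⟨n, hn⟩ := exists_nat_one_div_lt (sub_pos.mpr h)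
        exact ⟨n, by push_cast at hn ⊢; linarith⟩
    have htend : Filter.Tendsto (fun n : ℕ => ν (Iic (c - 1/(n+1)))) Filter.atTop
        (nhds (ν (Iio c))) := by
      have := tendsto_measure_iUnion_atTop (μ := ν)
        (s := fun n : ℕ => Iic (c - 1/(n+1)))
        (fun a b hab => Iic_subset_Iic.mpr (by
          have h1 : (a:ℝ) ≤ b := Nat.cast_le.mpr hab
          have : (1:ℝ)/(b+1) ≤ 1/(a+1) := by
            apply one_div_le_one_div_of_le (by positivity)
            linarith
          linarith))
      rwa [hiUnion] at this
    have hev : ∀ n : ℕ, ν (Iic (c - 1/(n+1))) ≤ ENNReal.ofReal p := by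
      intro n
      have hlt : c - 1/(n+1) < c := by
        have : (0:ℝ) < 1/(n+1) := by positivity
        linarith
      have hnA : (c - 1/(n+1)) ∉ A := fun hmem => absurd (csInf_le hbdd hmem) (not_le.mpr (hc ▸ hlt))
      have : F (c - 1/(n+1)) < p := not_le.mp hnA
      exact (ENNReal.le_ofReal_iff_toReal_le (hfin _) hp0.le).mpr this.le
    have := le_of_tendsto' htend hev
    calc (ν (Iio c)).toReal ≤ (ENNReal.ofReal p).toReal := ENNReal.toReal_mono (by finiteness) this
      _ = p := ENNReal.toReal_ofReal hp0.le
  -- split Iic c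
  have hsplit : (ν (Iic c)).toReal = (ν (Iio c)).toReal + (ν {c}).toReal := by
    have hu : Iio c ∪ {c} = Iic c := Iio_union_right
    rw [← hu, measure_union (by simp) (measurableSet_singleton c),
      ENNReal.toReal_add (hfin _) (hfin _)]
  set θ : ℝ := if ν {c} = 0 then 0 else (p - (ν (Iio c)).toReal) / (ν {c}).toReal with hθ
  have hθ0 : 0 ≤ θ := by
    rw [hθ]
    split_ifs with hb
    · exact le_refl 0
    · apply div_nonneg (by linarith) ENNReal.toReal_nonneg
  have hθ1 : θ ≤ 1 := by
    rw [hθ]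
    split_ifs with hb
    · exact zero_le_one
    · have hbpos : 0 < (ν {c}).toReal := ENNReal.toReal_pos hb (hfin _)
      rw [div_le_one hbpos]
      have := hFc
      simp only [hF] at this
      linarith [hsplit]
  set w : ℝ → ℝ := fun x =>
    (Iio c).indicator (fun _ => (1:ℝ)) x + θ * ({c} : Set ℝ).indicator (fun _ => (1:ℝ)) x with hwdef
  have hwlt : ∀ x, x < c → w x = 1 := by
    intro x hx
    simp [hwdef, Set.indicator_of_mem (mem_Iio.mpr hx), Set.indicator_of_notMem
      (by simp [ne_of_lt hx] : x ∉ ({c} : Set ℝ)), Pi.single_apply, ne_of_lt hx]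
  have hwc : w c = θ := by
    simp [hwdef, Set.indicator_of_notMem (by simp : c ∉ Iio c)]
  have hwgt : ∀ x, c < x → w x = 0 := by
    intro x hx
    simp [hwdef, Set.indicator_of_notMem (by simp [not_lt.mpr hx.le] : x ∉ Iio c),
      Set.indicator_of_notMem (by simp [(ne_of_gt hx)] : x ∉ ({c} : Set ℝ)), Pi.single_apply, ne_of_gt hx]
  have hw0 : ∀ x, 0 ≤ w x := by
    intro x
    rcases lt_trichotomy x c with h | h | h
    · rw [hwlt x h]; norm_num
    · rw [h, hwc]; exact hθ0
    · rw [hwgt x h]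
  have hw1 : ∀ x, w x ≤ 1 := by
    intro x
    rcases lt_trichotomy x c with h | h | h
    · rw [hwlt x h]
    · rw [h, hwc]; exact hθ1
    · rw [hwgt x h]; norm_num
  have hwmeas : Measurable w := by
    apply Measurable.add
    · exact measurable_const.indicator measurableSet_Iio
    · exact (measurable_const.indicator (measurableSet_singleton c)).const_mul θ
  have hw_int : Integrable w ν := by
    apply Integrable.add
    · exact (integrable_const (1:ℝ)).indicator measurableSet_Iio
    · exact (((integrable_const (1:ℝ)).indicator (measurableSet_singleton c)).const_mul θ)
  have hw_sum : ∫ x, w x ∂ν = p := by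
    have h1 : ∫ x, w x ∂ν = (ν (Iio c)).toReal + θ * (ν {c}).toReal := by
      rw [hwdef]
      rw [integral_add ((integrable_const (1:ℝ)).indicator measurableSet_Iio)
        (((integrable_const (1:ℝ)).indicator (measurableSet_singleton c)).const_mul θ)]
      rw [integral_const_mul, integral_indicator_const _ measurableSet_Iio,
        integral_indicator_const _ (measurableSet_singleton c)]
      simp
      rfl
    rw [h1, hθ]
    split_ifs with hb
    · simp only [hb, ENNReal.toReal_zero, mul_zero, add_zero, zero_mul]
      have h2 : F c = (ν (Iio c)).toReal := by
        simp only [hF]; rw [hsplit, hb]; simp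
      have := hFc
      rw [h2] at this
      linarith [hIio]
    · have hbpos : 0 < (ν {c}).toReal := ENNReal.toReal_pos hb (hfin _)
      field_simp
      ring
  -- identity
  have hmax : ∀ x, max (x - c) 0 = (x - c) + (c - x) * w x := by
    intro x
    rcases lt_trichotomy x c with h | h | h
    · rw [hwlt x h, max_eq_right (by linarith)]; ring
    · rw [h]; simp
    · rw [hwgt x h, max_eq_left (by linarith)]; ring
  -- integrability basics
  have hx_int : Integrable (fun x : ℝ => x) ν := hid2.integrable one_le_two
  have hxμ2 : MemLp (fun x : ℝ => x - μ) 2 ν := hid2.sub (memLp_const μ)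
  have hxμ2_int : Integrable (fun x : ℝ => (x - μ)^2) ν := by
    have := hxμ2.integrable_sq
    simpa [pow_two] using this
  have hcw_int : Integrable (fun x => (c - x) * w x) ν := by
    apply Integrable.mono' ((integrable_const c).sub hx_int).abs
      ((measurable_const.sub measurable_id).mul hwmeas).aestronglyMeasurable
    filter_upwards with x
    change ‖(c - x) * w x‖ ≤ |c - x|
    rw [Real.norm_eq_abs, abs_mul]
    calc |c - x| * |w x| ≤ |c - x| * 1 := by
          apply mul_le_mul_of_nonneg_left _ (abs_nonneg _)
          rw [abs_of_nonneg (hw0 x)]; exact hw1 x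
      _ = |c - x| := mul_one _
  -- the function g
  set g : ℝ → ℝ := fun x => (Iio μ).indicator (fun x => μ - x) x with hgdef
  have hgmeas : Measurable g := (measurable_const.sub measurable_id).indicator measurableSet_Iio
  have hg0 : ∀ x, 0 ≤ g x := by
    intro x
    simp only [hgdef]
    by_cases h : x ∈ Iio μ
    · rw [Set.indicator_of_mem h]; simp only [mem_Iio] at h; linarith
    · rw [Set.indicator_of_notMem h]
  have hgle : ∀ x, |g x| ≤ |x - μ| := by
    intro x
    rw [abs_of_nonneg (hg0 x)]; simp only [hgdef]
    by_cases h : x ∈ Iio μ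
    · rw [Set.indicator_of_mem h, abs_sub_comm]; exact le_abs_self _
    · rw [Set.indicator_of_notMem h]; exact abs_nonneg _
  have hg2 : MemLp g 2 ν := by
    apply MemLp.of_le hxμ2 hgmeas.aestronglyMeasurable
    filter_upwards with x
    rw [Real.norm_eq_abs, Real.norm_eq_abs]
    exact hgle x
  have hgw_int : Integrable (fun x => g x * w x) ν := by
    apply Integrable.mono' ((integrable_const μ).sub hx_int).abs
      (hgmeas.mul hwmeas).aestronglyMeasurable
    filter_upwards with x
    change ‖g x * w x‖ ≤ |μ - x|
    rw [Real.norm_eq_abs, abs_mul]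
    calc |g x| * |w x| ≤ |x - μ| * 1 := by
          apply mul_le_mul (hgle x) _ (abs_nonneg _) (abs_nonneg _)
          rw [abs_of_nonneg (hw0 x)]; exact hw1 x
      _ = |μ - x| := by rw [mul_one, abs_sub_comm]
  have hμxw_int : Integrable (fun x => (μ - x) * w x) ν := by
    apply Integrable.mono' ((integrable_const μ).sub hx_int).abs
      ((measurable_const.sub measurable_id).mul hwmeas).aestronglyMeasurable
    filter_upwards with x
    change ‖(μ - x) * w x‖ ≤ |μ - x|
    rw [Real.norm_eq_abs, abs_mul]
    calc |μ - x| * |w x| ≤ |μ - x| * 1 := by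
          apply mul_le_mul_of_nonneg_left _ (abs_nonneg _)
          rw [abs_of_nonneg (hw0 x)]; exact hw1 x
      _ = |μ - x| := mul_one _
  -- step 1 : ∫ max = (μ - c) + ∫ (c - x) w
  have hstep1 : ∫ x, max (x - c) 0 ∂ν = (μ - c) + ∫ x, (c - x) * w x ∂ν := by
    have e1 : ∫ x, max (x - c) 0 ∂ν = ∫ x, ((x - c) + (c - x) * w x) ∂ν :=
      integral_congr_ae (Filter.Eventually.of_forall hmax)
    rw [e1, integral_add (f := fun x => x - c) (g := fun x => (c - x) * w x)
        (hx_int.sub (integrable_const c)) hcw_int,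
      integral_sub hx_int (integrable_const c), hmean, integral_const]
    simp
  -- step 2 : ∫ (c - x) w = (c - μ) * p + ∫ (μ - x) w
  have hstep2 : ∫ x, (c - x) * w x ∂ν = (c - μ) * p + ∫ x, (μ - x) * w x ∂ν := by
    have : (fun x => (c - x) * w x) = fun x => (c - μ) * w x + (μ - x) * w x := by
      funext x; ring
    rw [this, integral_add (hw_int.const_mul _) hμxw_int, integral_const_mul, hw_sum]
  -- step 3 : ∫ (μ - x) w ≤ ∫ g w
  have hstep3 : ∫ x, (μ - x) * w x ∂ν ≤ ∫ x, g x * w x ∂ν := by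
    apply integral_mono hμxw_int hgw_int
    intro x
    by_cases h : x ∈ Iio μ
    · simp only [hgdef]; rw [Set.indicator_of_mem h]
    · simp only [hgdef]; rw [Set.indicator_of_notMem h, zero_mul]
      simp only [mem_Iio, not_lt] at h
      exact mul_nonpos_of_nonpos_of_nonneg (by linarith) (hw0 x)
  -- Cauchy–Schwarz
  have hpq : Real.HolderConjugate 2 2 := ⟨by norm_num, by norm_num, by norm_num⟩
  have hCS : ∫ x, g x * w x ∂ν
      ≤ (∫ x, g x ^ (2:ℝ) ∂ν) ^ ((1:ℝ)/2) * (∫ x, w x ^ (2:ℝ) ∂ν) ^ ((1:ℝ)/2) := by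
    apply integral_mul_le_Lp_mul_Lq_of_nonneg hpq
      (Filter.Eventually.of_forall hg0) (Filter.Eventually.of_forall hw0)
    · rw [show ENNReal.ofReal (2:ℝ) = 2 by simp [ENNReal.ofReal_ofNat]]
      exact hg2
    · rw [show ENNReal.ofReal (2:ℝ) = 2 by simp [ENNReal.ofReal_ofNat]]
      exact MemLp.of_bound hwmeas.aestronglyMeasurable 1
        (Filter.Eventually.of_forall fun x => by
          rw [Real.norm_eq_abs, abs_of_nonneg (hw0 x)]; exact hw1 x)
  -- bound on ∫ g²
  have hg2_int : Integrable (fun x => g x ^ 2) ν := hg2.integrable_sq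
  have hgsq_bound : ∫ x, g x ^ 2 ∂ν ≤ σ^2 / 2 := by
    set g2 : ℝ → ℝ := fun x => (Iio μ).indicator (fun x => (x - μ)^2) x with hg2def
    set g2' : ℝ → ℝ := fun x => (Ioi μ).indicator (fun x => (x - μ)^2) x with hg2'def
    have hgg2 : ∀ x, g x ^ 2 = g2 x := by
      intro x
      simp only [hgdef, hg2def]
      by_cases h : x ∈ Iio μ
      · rw [Set.indicator_of_mem h, Set.indicator_of_mem h]; ring
      · rw [Set.indicator_of_notMem h, Set.indicator_of_notMem h]; ring
    have hg2_int' : Integrable g2 ν := hxμ2_int.indicator measurableSet_Iio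
    have hg2'_int : Integrable g2' ν := hxμ2_int.indicator measurableSet_Ioi
    have hg2measurable : Measurable g2 :=
      ((measurable_id.sub measurable_const).pow_const 2).indicator measurableSet_Iio
    have hsymint : ∫ x, g2 x ∂ν = ∫ x, g2' x ∂ν := by
      have hT : Measurable (fun x : ℝ => 2*μ - x) := measurable_const.sub measurable_id
      have h1 : ∫ x, g2 x ∂ν = ∫ x, g2 (2*μ - x) ∂ν := by
        conv_lhs => rw [← hsym]
        rw [integral_map hT.aemeasurable hg2measurable.aestronglyMeasurable]
      rw [h1]
      apply integral_congr_ae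
      filter_upwards with x
      simp only [hg2def, hg2'def]
      by_cases h : μ < x
      · rw [Set.indicator_of_mem (mem_Iio.mpr (by linarith)),
          Set.indicator_of_mem (mem_Ioi.mpr h)]
        ring
      · rw [Set.indicator_of_notMem (by simp only [mem_Iio, not_lt]; linarith),
          Set.indicator_of_notMem (by simpa only [mem_Ioi, not_lt] using not_lt.mp h)]
    have hsum2 : ∫ x, g2 x ∂ν + ∫ x, g2' x ∂ν ≤ σ^2 := by
      rw [← integral_add hg2_int' hg2'_int]
      refine le_trans (integral_mono (hg2_int'.add hg2'_int) hxμ2_int ?_) hvar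
      intro x
      simp only [Pi.add_apply, hg2def, hg2'def]
      rcases lt_trichotomy x μ with h | h | h
      · rw [Set.indicator_of_mem (mem_Iio.mpr h),
          Set.indicator_of_notMem (by simp only [mem_Ioi, not_lt]; linarith)]
        simp
      · rw [h]; simp
      · rw [Set.indicator_of_notMem (by simp only [mem_Iio, not_lt]; linarith),
          Set.indicator_of_mem (mem_Ioi.mpr h)]
        simp
    have heq : ∫ x, g x ^ 2 ∂ν = ∫ x, g2 x ∂ν := integral_congr_ae
      (Filter.Eventually.of_forall hgg2)
    rw [heq]
    linarith [hsymint, hsum2]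
  have hwl2 : MemLp w 2 ν := MemLp.of_bound hwmeas.aestronglyMeasurable 1
    (Filter.Eventually.of_forall fun x => by
      rw [Real.norm_eq_abs, abs_of_nonneg (hw0 x)]; exact hw1 x)
  have hw2_int : Integrable (fun x => w x ^ 2) ν := by
    have := hwl2.integrable_sq
    simpa [pow_two] using this
  have hw2_bound : ∫ x, w x ^ 2 ∂ν ≤ p := by
    rw [← hw_sum]
    refine integral_mono hw2_int hw_int fun x => ?_
    calc w x ^ 2 = w x * w x := by ring
      _ ≤ w x * 1 := mul_le_mul_of_nonneg_left (hw1 x) (hw0 x)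
      _ = w x := mul_one _
  -- convert rpow to pow
  have hrg : ∫ x, g x ^ (2:ℝ) ∂ν = ∫ x, g x ^ 2 ∂ν := by
    apply integral_congr_ae
    filter_upwards with x
    rw [show ((2:ℝ)) = ((2:ℕ):ℝ) by norm_num, Real.rpow_natCast]
  have hrw : ∫ x, w x ^ (2:ℝ) ∂ν = ∫ x, w x ^ 2 ∂ν := by
    apply integral_congr_ae
    filter_upwards with x
    rw [show ((2:ℝ)) = ((2:ℕ):ℝ) by norm_num, Real.rpow_natCast]
  -- finish the Cauchy–Schwarz bound
  have hgw_bound : ∫ x, g x * w x ∂ν ≤ σ * Real.sqrt (p/2) := by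
    have h0g : 0 ≤ ∫ x, g x ^ 2 ∂ν := integral_nonneg fun x => sq_nonneg _
    have h0w : 0 ≤ ∫ x, w x ^ 2 ∂ν := integral_nonneg fun x => sq_nonneg _
    have h1 : (∫ x, g x ^ (2:ℝ) ∂ν) ^ ((1:ℝ)/2) ≤ (σ^2/2) ^ ((1:ℝ)/2) := by
      rw [hrg]
      exact Real.rpow_le_rpow h0g hgsq_bound (by norm_num)
    have h2 : (∫ x, w x ^ (2:ℝ) ∂ν) ^ ((1:ℝ)/2) ≤ p ^ ((1:ℝ)/2) := by
      rw [hrw]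
      exact Real.rpow_le_rpow h0w hw2_bound (by norm_num)
    have h3 : (∫ x, g x ^ (2:ℝ) ∂ν) ^ ((1:ℝ)/2) * (∫ x, w x ^ (2:ℝ) ∂ν) ^ ((1:ℝ)/2)
        ≤ (σ^2/2) ^ ((1:ℝ)/2) * p ^ ((1:ℝ)/2) := by
      apply mul_le_mul h1 h2 (Real.rpow_nonneg (hrw ▸ h0w) _)
        (Real.rpow_nonneg (by positivity) _)
    refine le_trans hCS (le_trans h3 (le_of_eq ?_))
    rw [← Real.rpow_natCast σ 2]
    rw [← Real.sqrt_eq_rpow, ← Real.sqrt_eq_rpow]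
    rw [← Real.sqrt_mul (by positivity)]
    rw [show ((σ:ℝ) ^ ((2:ℕ):ℝ)) = σ^2 by rw [Real.rpow_natCast]]
    rw [show (σ^2/2*p) = σ^2 * (p/2) by ring, Real.sqrt_mul (sq_nonneg σ),
      Real.sqrt_sq hσ]
  refine ⟨c, ?_⟩
  rw [hstep1, hstep2]
  have := le_trans hstep3 hgw_bound
  nlinarith [this]


set_option maxHeartbeats 1000000 in
/-- Gascuel–Caraux upper bound, second case: if `1 ≤ r ≤ k` and `(r−1)/k ≤ 1/2`, then
`E[X_{(r:k)}] ≤ μ + σ·√(k(r−1)/(2(k−r+1)²))`. -/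
theorem gascuel_caraux_upper_second {Ω : Type*} [MeasureSpace Ω]
    [IsProbabilityMeasure (volume : Measure Ω)]
    {k : ℕ} (hk : 1 ≤ k) (X : Fin k → Ω → ℝ) (μ σ : ℝ) (hσ : 0 ≤ σ)
    (hmeas : ∀ i, AEMeasurable (X i) volume)
    (hL2 : ∀ i, MemLp (X i) 2 volume)
    (hident : ∀ i j, IdentDistrib (X i) (X j) volume volume)
    (hmean : ∀ i, ∫ ω, X i ω = μ)
    (hvar : ∀ i, variance (X i) volume = σ ^ 2)
    (hsym : ∀ i, IdentDistrib (fun ω => 2 * μ - X i ω) (X i) volume volume)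
    (hint : ∀ r, Integrable (orderStat X r) volume)
    (r : ℕ) (hr1 : 1 ≤ r) (hrk : r ≤ k)
    (hhalf : ((r : ℝ) - 1) / (k : ℝ) ≤ 1 / 2) :
    ∫ ω, orderStat X r ω ≤
      μ + σ * Real.sqrt ((k : ℝ) * ((r : ℝ) - 1) / (2 * ((k : ℝ) - (r : ℝ) + 1) ^ 2)) := by
  classical
  set i0 : Fin k := ⟨0, hk⟩ with hi0
  have hX0int : Integrable (X i0) volume := (hL2 i0).integrable one_le_two
  have hsqrt_nonneg : 0 ≤ σ * Real.sqrt ((k : ℝ) * ((r : ℝ) - 1) / (2 * ((k : ℝ) - (r : ℝ) + 1) ^ 2)) :=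
    mul_nonneg hσ (Real.sqrt_nonneg _)
  rcases eq_or_lt_of_le hr1 with hr1' | hr2
  · -- case r = 1 : E min ≤ μ
    have hptw : ∀ ω, orderStat X r ω ≤ X i0 ω := by
      intro ω
      set l := (List.ofFn fun i => X i ω).mergeSort (fun a b => decide (a ≤ b)) with hl
      have hlen : l.length = k := by simp [hl]
      have hmem : X i0 ω ∈ l := by
        rw [List.Perm.mem_iff (List.mergeSort_perm _ _)]
        rw [List.mem_ofFn]
        exact ⟨i0, rfl⟩
      obtain ⟨n, hn, hval⟩ := List.mem_iff_getElem.mp hmem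
      have hsort : l.Pairwise (fun a b : ℝ => (decide (a ≤ b) : Bool)) :=
        List.pairwise_mergeSort (fun a b c => by simp only [decide_eq_true_eq]; exact le_trans)
          (fun a b => by simp [le_total]) _
      have h0 : 0 < l.length := hlen ▸ hk
      have : orderStat X r ω = l[0] := by
        rw [orderStat, ← hr1', ← hl]
        simp only [Nat.sub_self]
        exact List.getD_eq_getElem _ _ h0
      rw [this, ← hval]
      rcases Nat.eq_or_lt_of_le (Nat.zero_le n) with h | h
      · simp [← h]
      · have := List.pairwise_iff_getElem.mp hsort 0 n h0 hn h
        simpa using this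
    calc ∫ ω, orderStat X r ω ≤ ∫ ω, X i0 ω := integral_mono (hint r) hX0int hptw
      _ = μ := hmean i0
      _ ≤ _ := le_add_of_nonneg_right hsqrt_nonneg
  · -- case 2 ≤ r
    set p : ℝ := ((r:ℝ) - 1) / k with hpdef
    have hk0 : (0:ℝ) < k := by exact_mod_cast hk
    have hr2' : (2:ℝ) ≤ r := by exact_mod_cast hr2
    have hp0 : 0 < p := div_pos (by linarith) hk0
    set ν : Measure ℝ := Measure.map (X i0) volume with hν
    haveI : IsProbabilityMeasure ν := Measure.isProbabilityMeasure_map (hmeas i0)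
    have hid2 : MemLp (id : ℝ → ℝ) 2 ν :=
      (memLp_map_measure_iff aestronglyMeasurable_id (hmeas i0)).mpr (hL2 i0)
    have hmean' : ∫ x, x ∂ν = μ := by
      rw [hν]
      have h : ∫ (y:ℝ), y ∂(Measure.map (X i0) volume) = ∫ ω, X i0 ω :=
        integral_map (hmeas i0) measurable_id.aestronglyMeasurable
      rw [h]; exact hmean i0
    have hvar' : ∫ x, (x - μ)^2 ∂ν ≤ σ^2 := by
      have h1 : ∫ x, (x - μ)^2 ∂ν = ∫ ω, (X i0 ω - μ)^2 := by
        rw [hν]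
        exact integral_map (hmeas i0)
          ((measurable_id.sub_const μ).pow_const 2).aestronglyMeasurable
      have h2 := variance_eq_integral (hmeas i0)
      rw [hvar i0] at h2
      rw [h1, show σ^2 = σ^2 from rfl, h2]
      apply le_of_eq
      apply integral_congr_ae
      filter_upwards with ω
      simp [hmean i0]
    have hsym' : ν.map (fun x => 2*μ - x) = ν := by
      have hT : Measurable (fun x : ℝ => 2*μ - x) := measurable_const.sub measurable_id
      rw [hν, AEMeasurable.map_map_of_aemeasurable hT.aemeasurable (hmeas i0)]
      exact (hsym i0).map_eq
    obtain ⟨c, hcineq⟩ := quantile_bound ν μ σ p hσ hid2 hmean' hvar' hsym' hp0 hhalf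
    set m : ℝ := (k:ℝ) - r + 1 with hmdef
    have hm0 : (0:ℝ) < m := by
      have : (r:ℝ) ≤ k := by exact_mod_cast hrk
      simp only [hmdef]; linarith
    -- pointwise inequality, integrated
    have hφ : Measurable (fun x : ℝ => max (x - c) 0) :=
      (measurable_id.sub_const c).max measurable_const
    have hImax : ∀ i : Fin k, Integrable (fun ω => max (X i ω - c) 0) volume :=
      fun i => (((hL2 i).integrable one_le_two).sub (integrable_const c)).pos_part
    have hiν : ∀ i : Fin k, ∫ ω, max (X i ω - c) 0 = ∫ x, max (x - c) 0 ∂ν := by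
      intro i
      have h1 : IdentDistrib (fun ω => max (X i ω - c) 0) (fun ω => max (X i0 ω - c) 0)
          volume volume := (hident i i0).comp hφ
      rw [h1.integral_eq, hν, integral_map (hmeas i0) hφ.aestronglyMeasurable]
    have hIleft : Integrable (fun ω => m * (orderStat X r ω - c)) volume :=
      (((hint r).sub (integrable_const c)).const_mul m)
    have hIright : Integrable (fun ω => ∑ i, max (X i ω - c) 0) volume :=
      integrable_finset_sum _ (fun i _ => hImax i)
    have hptw : ∀ ω, m * (orderStat X r ω - c) ≤ ∑ i, max (X i ω - c) 0 := by
      intro ω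
      have := key_pointwise (fun i => X i ω) hr1 hrk c
      simpa [orderStat, hmdef] using this
    have hInt := integral_mono hIleft hIright hptw
    have hLHS : ∫ ω, m * (orderStat X r ω - c) = m * ((∫ ω, orderStat X r ω) - c) := by
      rw [integral_const_mul, integral_sub (hint r) (integrable_const c), integral_const]
      simp
    have hRHS : ∫ ω, ∑ i, max (X i ω - c) 0 = (k:ℝ) * ∫ x, max (x - c) 0 ∂ν := by
      rw [integral_finset_sum _ (fun i _ => hImax i)]
      rw [Finset.sum_congr rfl (fun i _ => hiν i)]
      rw [Finset.sum_const, Finset.card_univ, Fintype.card_fin, nsmul_eq_mul]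
    rw [hLHS, hRHS] at hInt
    -- combine
    have hmk : 1 - p = m / k := by
      simp only [hpdef, hmdef]
      field_simp
      ring
    have hB := hcineq
    have hstep : m * ((∫ ω, orderStat X r ω) - c) ≤ (k:ℝ) * ((μ - c)*(1-p) + σ * Real.sqrt (p/2)) := by
      refine le_trans hInt ?_
      apply mul_le_mul_of_nonneg_left hB hk0.le
    rw [hmk] at hstep
    have hkey : ∫ ω, orderStat X r ω ≤ μ + ((k:ℝ)/m) * (σ * Real.sqrt (p/2)) := by
      have h1 : (k:ℝ) * ((μ - c)*(m/k) + σ * Real.sqrt (p/2))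
          = (μ - c) * m + k * (σ * Real.sqrt (p/2)) := by field_simp
      rw [h1] at hstep
      have h4 : m * ((μ - c) + ((k:ℝ)/m) * (σ * Real.sqrt (p/2)))
          = (μ - c) * m + k * (σ * Real.sqrt (p/2)) := by field_simp
      have h5 : m * ((∫ ω, orderStat X r ω) - c)
          ≤ m * ((μ - c) + ((k:ℝ)/m) * (σ * Real.sqrt (p/2))) := by
        rw [h4]; exact hstep
      have h6 := le_of_mul_le_mul_left h5 hm0
      linarith
    refine le_trans hkey ?_
    apply add_le_add_right
    apply le_of_eq
    rw [show ((k:ℝ)/m) * (σ * Real.sqrt (p/2)) = σ * (((k:ℝ)/m) * Real.sqrt (p/2)) by ring]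
    congr 1
    rw [show ((k:ℝ)/m) * Real.sqrt (p/2) = Real.sqrt (((k:ℝ)/m)^2 * (p/2)) by
      rw [Real.sqrt_mul (by positivity), Real.sqrt_sq (by positivity)]]
    congr 1
    simp only [hpdef, hmdef]
    field_simp
end

section
/- (Lower bound on the expected sum of the m smallest order statistics) If 1 ≤ m ≤ k and 2m ≤ k, then the expected value of Y* = ∑_{r=1}^{m} X_{(r:k)} satisfies E[Y*] ≥ m·μ − (σ·√(2k)/2)·(2√m − 1). -/
open MeasureTheory ProbabilityTheory

lemma sum_inv_sqrt_le : ∀ m : ℕ, 1 ≤ m →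
    ∑ r ∈ Finset.Icc 1 m, (1 / Real.sqrt r) ≤ 2 * Real.sqrt m - 1 := by
  intro m
  induction m with
  | zero => omega
  | succ n ih =>
    intro _
    rcases Nat.eq_zero_or_pos n with hn | hn
    · subst hn; simp; norm_num
    · rw [Finset.sum_Icc_succ_top (by omega)]
      have key : 1 / Real.sqrt (n + 1) ≤ 2 * Real.sqrt (n + 1) - 2 * Real.sqrt n := by
        have ha : (0:ℝ) ≤ Real.sqrt n := Real.sqrt_nonneg _
        have hb : (0:ℝ) < Real.sqrt (n + 1) := Real.sqrt_pos.mpr (by positivity)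
        have ha2 : Real.sqrt n ^ 2 = n := Real.sq_sqrt (by positivity)
        have hb2 : Real.sqrt (n + 1) ^ 2 = n + 1 := Real.sq_sqrt (by positivity)
        rw [div_le_iff₀ hb]
        nlinarith [sq_nonneg (Real.sqrt (n+1) - Real.sqrt n)]
      have := ih hn
      push_cast
      push_cast at key
      linarith

/-- Lower bound on the expected sum of the `m` smallest order statistics: if `1 ≤ m ≤ k`
and `2m ≤ k`, then `E[∑_{r=1}^{m} X_{(r:k)}] ≥ m·μ − (σ·√(2k)/2)·(2√m − 1)`.
The Gascuel–Caraux per-term lower bound is taken as a hypothesis. -/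
theorem expected_sum_smallest_lower_bound {Ω : Type*} [MeasureSpace Ω]
    [IsProbabilityMeasure (volume : Measure Ω)]
    {k : ℕ} (hk : 1 ≤ k) (X : Fin k → Ω → ℝ) (μ σ : ℝ) (hσ : 0 ≤ σ)
    (hmeas : ∀ i, AEMeasurable (X i) volume)
    (hL2 : ∀ i, MemLp (X i) 2 volume)
    (hident : ∀ i j, IdentDistrib (X i) (X j) volume volume)
    (hmean : ∀ i, ∫ ω, X i ω = μ)
    (hvar : ∀ i, variance (X i) volume = σ ^ 2)
    (hsym : ∀ i, IdentDistrib (fun ω => 2 * μ - X i ω) (X i) volume volume)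
    (hint : ∀ r, Integrable (orderStat X r) volume)
    (hGC : ∀ r : ℕ, 1 ≤ r → 2 * r ≤ k →
      μ - σ * Real.sqrt ((k : ℝ) / (2 * (r : ℝ))) ≤ ∫ ω, orderStat X r ω)
    (m : ℕ) (hm1 : 1 ≤ m) (hmk : m ≤ k) (hm2 : 2 * m ≤ k) :
    (m : ℝ) * μ - σ * Real.sqrt (2 * (k : ℝ)) / 2 * (2 * Real.sqrt (m : ℝ) - 1) ≤
      ∫ ω, ∑ r ∈ Finset.Icc 1 m, orderStat X r ω := by
  rw [integral_finset_sum _ (fun r _ => hint r)]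
  set c : ℝ := σ * Real.sqrt (2 * (k : ℝ)) / 2 with hc
  have hc0 : 0 ≤ c := by positivity
  have key : ∀ r ∈ Finset.Icc 1 m, μ - c * (1 / Real.sqrt r) ≤ ∫ ω, orderStat X r ω := by
    intro r hr
    obtain ⟨hr1, hrm⟩ := Finset.mem_Icc.mp hr
    have hr0 : (0:ℝ) < r := by exact_mod_cast hr1
    have hsq : Real.sqrt ((k : ℝ) / (2 * r)) = Real.sqrt (2 * k) / (2 * Real.sqrt r) := by
      have h4 : Real.sqrt (4 * (r:ℝ)) = 2 * Real.sqrt r := by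
        rw [show (4:ℝ) * r = (2 * Real.sqrt r) ^ 2 by
          rw [mul_pow, Real.sq_sqrt hr0.le]; ring]
        exact Real.sqrt_sq (by positivity)
      rw [show (k:ℝ)/(2*r) = (2*(k:ℝ)) / (4*r) by ring,
        Real.sqrt_div (by positivity), h4]
    have := hGC r hr1 (by omega)
    rw [hsq] at this
    have : μ - σ * (Real.sqrt (2 * k) / (2 * Real.sqrt r)) ≤ ∫ ω, orderStat X r ω := this
    have heq : c * (1 / Real.sqrt r) = σ * (Real.sqrt (2 * k) / (2 * Real.sqrt r)) := by
      rw [hc]; field_simp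
    linarith [heq ▸ this]
  have hsum := Finset.sum_le_sum key
  have hcard : (Finset.Icc 1 m).card = m := by rw [Nat.card_Icc]; omega
  rw [Finset.sum_sub_distrib, Finset.sum_const, hcard, ← Finset.mul_sum] at hsum
  have hinv := sum_inv_sqrt_le m hm1
  have : c * (∑ r ∈ Finset.Icc 1 m, 1 / Real.sqrt r) ≤ c * (2 * Real.sqrt m - 1) :=
    mul_le_mul_of_nonneg_left hinv hc0
  calc (m : ℝ) * μ - c * (2 * Real.sqrt m - 1)
      ≤ (m : ℝ) * μ - c * ∑ r ∈ Finset.Icc 1 m, 1 / Real.sqrt r := by linarith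
    _ ≤ _ := by simpa [nsmul_eq_mul] using hsum
end

section
/- For real numbers μ, σ with σ ≥ 0 and natural numbers ℓ, k with 1 ≤ ℓ ≤ k, the sum of the per-term Gascuel–Caraux upper bounds satisfies ∑_{r=k−ℓ+1}^{k} (μ + σ·√(k/(2(k−r+1)))) ≤ ℓ·μ + (σ·√(2k)/2)·(2√ℓ − 1). -/
lemma inv_sqrt_sum_le_aux (n : ℕ) (hn : 1 ≤ n) :
    ∑ j ∈ Finset.Icc 1 n, (1 / Real.sqrt j) ≤ 2 * Real.sqrt n - 1 := by
  induction n, hn using Nat.le_induction with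
  | base => norm_num
  | succ n hn ih =>
    rw [Finset.sum_Icc_succ_top (by omega)]
    have hb : (0:ℝ) < Real.sqrt (n+1) := Real.sqrt_pos.2 (by positivity)
    have ha : (0:ℝ) ≤ Real.sqrt n := Real.sqrt_nonneg _
    have ha2 : Real.sqrt n ^ 2 = (n:ℝ) := Real.sq_sqrt (by positivity)
    have hb2 : Real.sqrt (n+1) ^ 2 = (n:ℝ)+1 := Real.sq_sqrt (by positivity)
    have h1 : (1:ℝ) / Real.sqrt ((n:ℝ)+1) ≤ 2 * Real.sqrt ((n:ℝ)+1) - 2 * Real.sqrt n := by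
      rw [div_le_iff₀ hb]
      nlinarith [sq_nonneg (Real.sqrt (n+1) - Real.sqrt n)]
    push_cast
    push_cast at ih h1
    linarith

/-- For real `μ, σ` with `σ ≥ 0` and natural numbers `ℓ, k` with `1 ≤ ℓ ≤ k`, the sum of the
per-term Gascuel–Caraux upper bounds satisfies
`∑_{r=k−ℓ+1}^{k} (μ + σ·√(k/(2(k−r+1)))) ≤ ℓ·μ + (σ·√(2k)/2)·(2√ℓ − 1)`. -/
theorem sum_gascuel_caraux_upper_bounds (μ σ : ℝ) (hσ : 0 ≤ σ) (ℓ k : ℕ)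
    (hℓ : 1 ≤ ℓ) (hℓk : ℓ ≤ k) :
    ∑ r ∈ Finset.Icc (k - ℓ + 1) k, (μ + σ * Real.sqrt ((k : ℝ) / (2 * ((k : ℝ) - (r : ℝ) + 1)))) ≤
      (ℓ : ℝ) * μ + σ * Real.sqrt (2 * (k : ℝ)) / 2 * (2 * Real.sqrt (ℓ : ℝ) - 1) := by
  have hcard : (Finset.Icc (k - ℓ + 1) k).card = ℓ := by
    rw [Nat.card_Icc]; omega
  rw [Finset.sum_add_distrib, Finset.sum_const, hcard, nsmul_eq_mul]
  have key : ∑ r ∈ Finset.Icc (k-ℓ+1) k, σ * Real.sqrt ((k:ℝ)/(2*((k:ℝ)-(r:ℝ)+1)))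
      = ∑ j ∈ Finset.Icc 1 ℓ, σ * Real.sqrt (2*(k:ℝ)) / 2 * (1 / Real.sqrt j) := by
    refine Finset.sum_nbij' (fun r => k - r + 1) (fun j => k - j + 1) ?_ ?_ ?_ ?_ ?_
    · intro r hr; simp only [Finset.mem_Icc] at *; omega
    · intro j hj; simp only [Finset.mem_Icc] at *; omega
    · intro r hr; simp only [Finset.mem_Icc] at hr; omega
    · intro j hj; simp only [Finset.mem_Icc] at hj; omega
    · intro r hr
      simp only [Finset.mem_Icc] at hr
      have hrk : r ≤ k := hr.2
      have hr1 : 1 ≤ r := by omega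
      have hcast : ((k - r + 1 : ℕ) : ℝ) = (k:ℝ) - (r:ℝ) + 1 := by
        push_cast [Nat.cast_sub hrk]; ring
      rw [hcast]
      set x : ℝ := (k:ℝ) - (r:ℝ) + 1 with hx
      have hxpos : (0:ℝ) < x := by
        have : (r:ℝ) ≤ (k:ℝ) := by exact_mod_cast hrk
        simp [hx]; linarith
      have harg : (k:ℝ)/(2*x) = (2*(k:ℝ)) / (2 * Real.sqrt x)^2 := by
        rw [mul_pow, Real.sq_sqrt hxpos.le]
        field_simp
      rw [harg, Real.sqrt_div' _ ?pos]
      case pos => positivity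
      · rw [Real.sqrt_sq (by positivity)]
        ring
  rw [key, ← Finset.mul_sum]
  have h2 := inv_sqrt_sum_le_aux ℓ hℓ
  have hnn : 0 ≤ σ * Real.sqrt (2*(k:ℝ)) / 2 := by positivity
  nlinarith [mul_le_mul_of_nonneg_left h2 hnn]
end
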